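/- arXiv:1306.6303 — 13 statements merged into one kernel-verified Lean document; each statement's English description precedes it below -/
import Mathlib

section
/- For all complex parameter values and all nonzero complex numbers z1, z2 with Λ(z1,z2) ≠ 0 and Λ(z2,z1) ≠ 0, the scattering amplitude S and decay coefficient N satisfy the adjacent-excitation relation: z2·(X11 − q·z1 − p·z2^{-1}) + S(z1,z2)·z1·(X11 − q·z2 − p·z1^{-1}) + 2·N(z1,z2)·(s2·z1·z2 + s1) = 0. -/
noncomputable section

/-- The amplitude `Λ(z1, z2)` of the coordinate Bethe ansatz. -/
def Lam (p q t1 t2 s1 s2 tp sp X11 Y z1 z2 : ℂ) : ℂ :=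
  z2 * (s1 + s2 * z1 * z2) * (t2 + t1 * z1 * z2) -
    (Y * z1 * z2 - q * z1 * z2 * (z1 + z2) - p * (z1 + z2) + sp * z1 ^ 2 * z2 ^ 2 + tp) *
      (X11 * z2 - q * z1 * z2 - p)

/-- The scattering amplitude `S(z1, z2) = -Λ(z1,z2)/Λ(z2,z1)`. -/
def Sc (p q t1 t2 s1 s2 tp sp X11 Y z1 z2 : ℂ) : ℂ :=
  -(Lam p q t1 t2 s1 s2 tp sp X11 Y z1 z2 / Lam p q t1 t2 s1 s2 tp sp X11 Y z2 z1)

/-- The decay coefficient `N(z1, z2)`. -/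
def Nc (p q t1 t2 s1 s2 tp sp X11 Y z1 z2 : ℂ) : ℂ :=
  (z1 - z2) * (p + q * z1 * z2) * (t2 + t1 * z1 * z2) /
    (2 * Lam p q t1 t2 s1 s2 tp sp X11 Y z2 z1)

/-- The adjacent-excitation relation satisfied by `S` and `N`. -/
theorem statement5 (p q t1 t2 s1 s2 tp sp X11 Y z1 z2 : ℂ)
    (hz1 : z1 ≠ 0) (hz2 : z2 ≠ 0)
    (h12 : Lam p q t1 t2 s1 s2 tp sp X11 Y z1 z2 ≠ 0)
    (h21 : Lam p q t1 t2 s1 s2 tp sp X11 Y z2 z1 ≠ 0) :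
    z2 * (X11 - q * z1 - p * z2⁻¹) +
        Sc p q t1 t2 s1 s2 tp sp X11 Y z1 z2 * z1 * (X11 - q * z2 - p * z1⁻¹) +
        2 * Nc p q t1 t2 s1 s2 tp sp X11 Y z1 z2 * (s2 * z1 * z2 + s1) = 0 := by
  unfold Sc Nc
  field_simp
  unfold Lam
  ring
end
end

section
/- For all complex parameter values and all nonzero complex numbers z1, z2 with Λ(z1,z2) ≠ 0 and Λ(z2,z1) ≠ 0, the scattering amplitude S and decay coefficient N satisfy the coincident-excitation relation: 2·N(z1,z2)·( Y − q·(z1+z2) − p·(z1^{-1}+z2^{-1}) + sp·z1·z2 + tp·z1^{-1}·z2^{-1} ) + (t1·z2 + t2·z1^{-1}) + S(z1,z2)·(t1·z1 + t2·z2^{-1}) = 0. -/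
noncomputable section

/-- The coincident-excitation relation satisfied by `S` and `N`. -/
theorem statement6 (p q t1 t2 s1 s2 tp sp X11 Y z1 z2 : ℂ)
    (hz1 : z1 ≠ 0) (hz2 : z2 ≠ 0)
    (h12 : Lam p q t1 t2 s1 s2 tp sp X11 Y z1 z2 ≠ 0)
    (h21 : Lam p q t1 t2 s1 s2 tp sp X11 Y z2 z1 ≠ 0) :
    2 * Nc p q t1 t2 s1 s2 tp sp X11 Y z1 z2 *
        (Y - q * (z1 + z2) - p * (z1⁻¹ + z2⁻¹) + sp * z1 * z2 + tp * z1⁻¹ * z2⁻¹) +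
      (t1 * z2 + t2 * z1⁻¹) +
      Sc p q t1 t2 s1 s2 tp sp X11 Y z1 z2 * (t1 * z1 + t2 * z2⁻¹) = 0 := by
  simp only [Nc, Sc] at *
  field_simp
  simp only [Lam]
  ring
end
end

section
/- For the generalized Zamolodchikov–Fateev (gZF) parameter family, the amplitude Λ factorizes: for all complex z1, z2, τ2·τp·Λ(z1,z2) = (p + q·z1z2)·(t2 + t1·z1z2)·( z1z2 − τp·(z1+z2−σ·z2) + τp² ). Consequently, wherever the denominators are nonzero, S(z1,z2) = −( z1z2 − τp·(z1+z2−σ·z2) + τp² )/( z1z2 − τp·(z1+z2−σ·z1) + τp² ) and N(z1,z2) = τ2·τp·(z1−z2)/( 2·( z1z2 − τp·(z1+z2−σ·z1) + τp² ) ). -/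
noncomputable section

/-- Factorization of `Λ` and the resulting `S` and `N` for the generalized
Zamolodchikov–Fateev model. -/
theorem statement7 (p tp t2 s1 : ℂ)
    (hp : p ≠ 0) (htp : tp ≠ 0) (ht2 : t2 ≠ 0) (hs1 : s1 ≠ 0)
    (q t1 s2 sp X11 Y τp τ2 σ : ℂ)
    (hq : q = p ^ 3 / tp ^ 2) (ht1 : t1 = p ^ 2 * t2 / tp ^ 2)
    (hs2 : s2 = p ^ 2 * s1 / tp ^ 2) (hsp : sp = p ^ 4 / tp ^ 3)
    (hX11 : X11 = 0) (hY : Y = 2 * p ^ 2 / tp)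
    (hτp : τp = tp / p) (hτ2 : τ2 = t2 / p) (hσ : σ = s1 * t2 / p ^ 2) :
    (∀ z1 z2 : ℂ,
      τ2 * τp * Lam p q t1 t2 s1 s2 tp sp X11 Y z1 z2 =
        (p + q * z1 * z2) * (t2 + t1 * z1 * z2) *
          (z1 * z2 - τp * (z1 + z2 - σ * z2) + τp ^ 2)) ∧
    ∀ z1 z2 : ℂ, Lam p q t1 t2 s1 s2 tp sp X11 Y z2 z1 ≠ 0 →
      Sc p q t1 t2 s1 s2 tp sp X11 Y z1 z2 =
          -((z1 * z2 - τp * (z1 + z2 - σ * z2) + τp ^ 2) /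
            (z1 * z2 - τp * (z1 + z2 - σ * z1) + τp ^ 2)) ∧
      Nc p q t1 t2 s1 s2 tp sp X11 Y z1 z2 =
          τ2 * τp * (z1 - z2) /
            (2 * (z1 * z2 - τp * (z1 + z2 - σ * z1) + τp ^ 2)) := by
  have hfact : ∀ z1 z2 : ℂ,
      τ2 * τp * Lam p q t1 t2 s1 s2 tp sp X11 Y z1 z2 =
        (p + q * z1 * z2) * (t2 + t1 * z1 * z2) *
          (z1 * z2 - τp * (z1 + z2 - σ * z2) + τp ^ 2) := by
    intro z1 z2
    subst hq ht1 hs2 hsp hX11 hY hτp hτ2 hσ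
    simp only [Lam]
    have hU : tp * tp⁻¹ = 1 := mul_inv_cancel₀ htp
    have hV : p * p⁻¹ = 1 := mul_inv_cancel₀ hp
    linear_combination (2*p^2*t2^2*s1*z1*z2^2*tp⁻¹*p⁻¹^2 + p^3*t2*z1*z2*p⁻¹^2 + 2*p^3*t2*z1*z2^2*tp⁻¹*p⁻¹ + 2*p^3*t2*z1^2*z2*tp⁻¹*p⁻¹ + (-2)*p^3*t2^2*s1*z1*z2^2*tp⁻¹*p⁻¹^3 + (-1)*p^3*tp*t2*z1*z2*tp⁻¹*p⁻¹^2 + (-2)*p^4*t2*z1*z2^2*tp⁻¹*p⁻¹^2 + (-2)*p^4*t2*z1^2*z2*tp⁻¹*p⁻¹^2 + p^4*t2^2*s1*z1^2*z2^3*tp⁻¹^3*p⁻¹^2 + 2*p^5*t2*z1^2*z2^2*tp⁻¹^2*p⁻¹^2 + p^5*t2*z1^2*z2^3*tp⁻¹^3*p⁻¹ + p^5*t2*z1^3*z2^2*tp⁻¹^3*p⁻¹ + (-1)*p^5*t2^2*s1*z1^2*z2^3*tp⁻¹^3*p⁻¹^3 + (-1)*p^5*tp*t2*z1^2*z2^2*tp⁻¹^3*p⁻¹^2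 + (-1)*p^6*t2*z1^2*z2^3*tp⁻¹^3*p⁻¹^2 + (-1)*p^6*t2*z1^3*z2^2*tp⁻¹^3*p⁻¹^2 + p^7*t2*z1^3*z2^3*tp⁻¹^4*p⁻¹^2) * hU + ((-1)*tp*t2^2*s1*z2*p⁻¹^2 + p*t2*z1*z2 + (-1)*p*tp*t2*z2*p⁻¹ + (-1)*p*tp*t2*z1*p⁻¹ + p^2*t2*z1*z2*p⁻¹ + (-2)*p^2*t2^2*s1*z1*z2^2*tp⁻¹*p⁻¹^2 + (-2)*p^3*t2*z1*z2^2*tp⁻¹*p⁻¹ + (-2)*p^3*t2*z1^2*z2*tp⁻¹*p⁻¹ + 2*p^3*t2*z1^2*z2^2*tp⁻¹^2 + 2*p^4*t2*z1^2*z2^2*tp⁻¹^2*p⁻¹ + (-1)*p^4*t2^2*s1*z1^2*z2^3*tp⁻¹^3*p⁻¹^2 + (-1)*p^5*t2*z1^2*z2^3*tp⁻¹^3*p⁻¹ + (-1)*p^5*t2*z1^3*z2^2*tp⁻¹^3*p⁻¹ + p^5*t2*z1^3*z2^3*tp⁻¹^4 + p^6*t2*z1^3*z2^3*tp⁻¹^4*p⁻¹)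 * hV
  refine ⟨hfact, ?_⟩
  intro z1 z2 h21
  have hτpne : τp ≠ 0 := by rw [hτp]; exact div_ne_zero htp hp
  have hτ2ne : τ2 ≠ 0 := by rw [hτ2]; exact div_ne_zero ht2 hp
  have hττ : τ2 * τp ≠ 0 := mul_ne_zero hτ2ne hτpne
  have h12 := hfact z1 z2
  have h21f := hfact z2 z1
  set F := (p + q * z1 * z2) * (t2 + t1 * z1 * z2) with hF
  set A := z1 * z2 - τp * (z1 + z2 - σ * z2) + τp ^ 2 with hA
  set B := z1 * z2 - τp * (z1 + z2 - σ * z1) + τp ^ 2 with hB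
  have h21f' : τ2 * τp * Lam p q t1 t2 s1 s2 tp sp X11 Y z2 z1 = F * B := by
    rw [h21f, hF, hB]; ring
  have hFB : F * B ≠ 0 := by rw [← h21f']; exact mul_ne_zero hττ h21
  have hFne : F ≠ 0 := fun h => hFB (by rw [h, zero_mul])
  have hBne : B ≠ 0 := fun h => hFB (by rw [h, mul_zero])
  have hL12 : Lam p q t1 t2 s1 s2 tp sp X11 Y z1 z2 = F * A / (τ2 * τp) := by
    field_simp
    linear_combination h12
  have hL21 : Lam p q t1 t2 s1 s2 tp sp X11 Y z2 z1 = F * B / (τ2 * τp) := by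
    field_simp
    linear_combination h21f'
  constructor
  · rw [Sc, hL12, hL21]
    congr 1
    rw [div_div_div_cancel_right₀, mul_div_mul_left _ _ hFne]
    exact hττ
  · rw [Nc, hL21]
    have hd : (2 : ℂ) * (F * B / (τ2 * τp)) ≠ 0 :=
      mul_ne_zero two_ne_zero (div_ne_zero hFB hττ)
    rw [div_eq_div_iff hd (mul_ne_zero two_ne_zero hBne), hF]
    field_simp
end
end

section
/- For the generalized Izergin–Korepin (gIK) parameter family, the amplitude Λ satisfies the factorization: for all complex z1, z2, τ2·τp·( u^{-1}·z1z2 + τp² )·Λ(z1,z2) = (p + q·z1z2)·(t2 + t1·z1z2)·( v²·z1z2 − τp·(z1 + v·z2) + τp² )·( v²·z1z2 − τp·(1+v)·z2 + τp² ). Consequently, wherever the denominators are nonzero, S(z1,z2) = −( v²·z1z2 − τp·(z1+v·z2) + τp² )·( v²·z1z2 − τp·(1+v)·z2 + τp² ) / ( ( v²·z1z2 − τp·(z2+v·z1) + τp² )·( v²·z1z2 − τp·(1+v)·z1 + τp² ) ) and N(z1,z2) = τ2·τp·(z1−z2)·( u^{-1}·z1z2 + τp² ) / ( 2·( v²·z1z2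 − τp·(z2+v·z1) + τp² )·( v²·z1z2 − τp·(1+v)·z1 + τp² ) ). -/
noncomputable section

theorem keyCleared (p tp t2 v u q t1 s1 s2 sp X11 Y z1 z2 : ℂ)
    (hq2 : q * tp ^ 2 = v ^ 2 * p ^ 3)
    (ht12 : t1 * (u * tp ^ 2) = p ^ 2 * t2)
    (hs12 : s1 * t2 = v * (v - 1) * p ^ 2)
    (hs22 : s2 * (t2 * tp ^ 2) = v ^ 5 * (v - 1) * p ^ 4 * u)
    (hsp2 : sp * tp ^ 3 = v ^ 4 * p ^ 4)
    (hX2 : X11 * tp = v * (v + 1) * p ^ 2)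
    (hY2 : Y * tp = (v ^ 2 + 1) * p ^ 2)
    (hu : v ^ 4 * u ^ 2 + (1 + 2 * v - v ^ 2) * u + 1 = 0) :
    u * t2 * tp ^ 5 * Lam p q t1 t2 s1 s2 tp sp X11 Y z1 z2 =
      u * t2 * tp ^ 2 * (p + q * z1 * z2) *
        (v ^ 2 * p ^ 2 * z1 * z2 - p * tp * (z1 + v * z2) + tp ^ 2) *
        (v ^ 2 * p ^ 2 * z1 * z2 - p * tp * (1 + v) * z2 + tp ^ 2) := by
  simp only [Lam]
  linear_combination
    (tp^3*t2*u*z1*z2^3*X11 + tp^3*t2*u*z1^2*z2^2*Y + tp^3*t2*u*z1^2*z2^2*X11 - tp^3*t2*u*z1^2*z2^3*q - tp^3*t2*u*z1^3*z2^2*q + tp^3*t2*u*z1^3*z2^3*sp - p*tp^3*t2*u*z1*z2^2 - p*tp^3*t2*u*z1^2*z2 + (2)*p*tp^3*t2*v*u*z1*z2^2 - p^2*tp^2*t2*u*z1^2*z2^2 - p^2*tp^2*t2*v*u*z1*z2^3 - p^2*tp^2*t2*v*u*z1^2*z2^2 - p^2*tp^2*t2*v^2*u*z1*z2^3 + (-2)*p^2*tp^2*t2*v^2*u*z1^2*z2^2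 + (2)*p^3*tp*t2*v^3*u*z1^2*z2^3 - p^4*t2*v^4*u*z1^3*z2^3) * hq2 +
    (tp^3*t2*z1*z2^2*s1 + tp^3*t2*z1^2*z2^3*s2) * ht12 +
    (tp^5*t2*u*z2 + p^2*tp^3*t2*z1*z2^2) * hs12 +
    (tp^3*t2*u*z1*z2^2 + p^2*tp*t2*z1^2*z2^3) * hs22 +
    ((-1)*tp^2*t2*u*z1^2*z2^3*X11 + p*tp^2*t2*u*z1^2*z2^2 + p^3*t2*v^2*u*z1^3*z2^3) * hsp2 +
    ((-1)*tp^4*t2*u*z1*z2^2*Y - tp^5*t2*u*z2 + p*tp^4*t2*u*z2^2 + p*tp^4*t2*u*z1*z2 + p^3*tp^2*t2*v^2*u*z1*z2^3 + p^3*tp^2*t2*v^2*u*z1^2*z2^2 - p^4*tp*t2*v^4*u*z1^2*z2^3) * hX2 +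
    (p*tp^4*t2*u*z1*z2 - p^2*tp^3*t2*v*u*z1*z2^2 - p^2*tp^3*t2*v^2*u*z1*z2^2 + p^3*tp^2*t2*v^2*u*z1^2*z2^2) * hY2 +
    ((-1)*p^4*tp^3*t2*v*z1*z2^2 + p^4*tp^3*t2*v^2*z1*z2^2) * hu

set_option maxHeartbeats 2000000 in
/-- Factorization of `Λ` and the resulting `S` and `N` for the generalized
Izergin–Korepin model. -/
theorem statement10 (p tp t2 v u u' : ℂ)
    (hp : p ≠ 0) (htp : tp ≠ 0) (ht2 : t2 ≠ 0)
    (hu : v ^ 4 * u ^ 2 + (1 + 2 * v - v ^ 2) * u + 1 = 0)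
    (hu' : v ^ 4 * u' ^ 2 + (1 + 2 * v - v ^ 2) * u' + 1 = 0)
    (huu' : u * u' = (v ^ 4)⁻¹)
    (q t1 s1 s2 sp X11 Y τp τ2 : ℂ)
    (hsp : sp = v ^ 4 * p ^ 4 / tp ^ 3) (hq : q = v ^ 2 * p ^ 3 / tp ^ 2)
    (ht1 : t1 = p ^ 2 * t2 / (u * tp ^ 2))
    (hs1 : s1 = v * (v - 1) * p ^ 2 / t2)
    (hs2 : s2 = v * (v - 1) * p ^ 4 / (u' * t2 * tp ^ 2))
    (hX11 : X11 = v * (v + 1) * p ^ 2 / tp) (hY : Y = (v ^ 2 + 1) * p ^ 2 / tp)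
    (hτp : τp = tp / p) (hτ2 : τ2 = t2 / p) :
    (∀ z1 z2 : ℂ,
      τ2 * τp * (u⁻¹ * z1 * z2 + τp ^ 2) * Lam p q t1 t2 s1 s2 tp sp X11 Y z1 z2 =
        (p + q * z1 * z2) * (t2 + t1 * z1 * z2) *
          (v ^ 2 * z1 * z2 - τp * (z1 + v * z2) + τp ^ 2) *
          (v ^ 2 * z1 * z2 - τp * (1 + v) * z2 + τp ^ 2)) ∧
    ∀ z1 z2 : ℂ, Lam p q t1 t2 s1 s2 tp sp X11 Y z2 z1 ≠ 0 →
      (v ^ 2 * z1 * z2 - τp * (z2 + v * z1) + τp ^ 2) ≠ 0 →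
      (v ^ 2 * z1 * z2 - τp * (1 + v) * z1 + τp ^ 2) ≠ 0 →
      Sc p q t1 t2 s1 s2 tp sp X11 Y z1 z2 =
          -((v ^ 2 * z1 * z2 - τp * (z1 + v * z2) + τp ^ 2) *
              (v ^ 2 * z1 * z2 - τp * (1 + v) * z2 + τp ^ 2) /
            ((v ^ 2 * z1 * z2 - τp * (z2 + v * z1) + τp ^ 2) *
              (v ^ 2 * z1 * z2 - τp * (1 + v) * z1 + τp ^ 2))) ∧
      Nc p q t1 t2 s1 s2 tp sp X11 Y z1 z2 =
          τ2 * τp * (z1 - z2) * (u⁻¹ * z1 * z2 + τp ^ 2) /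
            (2 * (v ^ 2 * z1 * z2 - τp * (z2 + v * z1) + τp ^ 2) *
              (v ^ 2 * z1 * z2 - τp * (1 + v) * z1 + τp ^ 2)) := by
  have hv : v ≠ 0 := by
    intro h; subst h
    have h1 : u = -1 := by linear_combination hu
    have h2 : u' = -1 := by linear_combination hu'
    rw [h1, h2] at huu'; norm_num at huu'
  have hv4 : v ^ 4 ≠ 0 := pow_ne_zero _ hv
  have hu0 : u ≠ 0 := fun h => hv4 (by rwa [h, zero_mul, eq_comm, inv_eq_zero] at huu')
  have hu'0 : u' ≠ 0 := fun h => hv4 (by rwa [h, mul_zero, eq_comm, inv_eq_zero] at huu')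
  have hvu : v ^ 4 * (u * u') = 1 := by rw [huu']; field_simp
  have hq2 : q * tp ^ 2 = v ^ 2 * p ^ 3 := by rw [hq]; field_simp
  have ht12 : t1 * (u * tp ^ 2) = p ^ 2 * t2 := by rw [ht1]; field_simp
  have hs12 : s1 * t2 = v * (v - 1) * p ^ 2 := by rw [hs1]; field_simp
  have hs22 : s2 * (t2 * tp ^ 2) = v ^ 5 * (v - 1) * p ^ 4 * u := by
    rw [hs2]; field_simp
    linear_combination (1 - v) * hvu
  have hsp2 : sp * tp ^ 3 = v ^ 4 * p ^ 4 := by rw [hsp]; field_simp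
  have hX2 : X11 * tp = v * (v + 1) * p ^ 2 := by rw [hX11]; field_simp
  have hY2 : Y * tp = (v ^ 2 + 1) * p ^ 2 := by rw [hY]; field_simp
  have hne : u * t2 * tp ^ 2 ≠ 0 := mul_ne_zero (mul_ne_zero hu0 ht2) (pow_ne_zero _ htp)
  have hL3 : ∀ z1 z2 : ℂ, tp ^ 3 * Lam p q t1 t2 s1 s2 tp sp X11 Y z1 z2 =
      (p + q * z1 * z2) * (v ^ 2 * p ^ 2 * z1 * z2 - p * tp * (z1 + v * z2) + tp ^ 2) *
        (v ^ 2 * p ^ 2 * z1 * z2 - p * tp * (1 + v) * z2 + tp ^ 2) := by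
    intro z1 z2
    apply mul_left_cancel₀ hne
    linear_combination keyCleared p tp t2 v u q t1 s1 s2 sp X11 Y z1 z2
      hq2 ht12 hs12 hs22 hsp2 hX2 hY2 hu
  have hτpp : τp * p = tp := by rw [hτp]; field_simp
  have hτ2p : τ2 * p = t2 := by rw [hτ2]; field_simp
  have hui : u * u⁻¹ = 1 := mul_inv_cancel₀ hu0
  constructor
  · intro z1 z2
    have hL12 := hL3 z1 z2
    apply mul_left_cancel₀ (show (p ^ 4 * u * tp ^ 3 : ℂ) ≠ 0 from
      mul_ne_zero (mul_ne_zero (pow_ne_zero _ hp) hu0) (pow_ne_zero _ htp))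
    linear_combination
      (p^4*u*τp^3*τ2 + p^4*u*z1*z2*τp*τ2*u⁻¹) * hL12 +
      (-p^4*tp*z1^2*z2^2*q*τp^4 + p^4*tp*z1^2*z2^3*q*τp^3 + p^4*tp*z1^3*z2^2*q*τp^3 - p^4*tp*z1^3*z2^3*q*τp^2 + (2)*p^4*tp*v*z1^2*z2^3*q*τp^3 - p^4*tp*v*z1^2*z2^4*q*τp^2 - p^4*tp*v*z1^3*z2^3*q*τp^2 - p^4*tp*v^2*z1^2*z2^4*q*τp^2 + (-2)*p^4*tp*v^2*z1^3*z2^3*q*τp^2 + p^4*tp*v^2*z1^3*z2^4*q*τp + p^4*tp*v^2*z1^4*z2^3*q*τp + (2)*p^4*tp*v^3*z1^3*z2^4*q*τp - p^4*tp*v^4*z1^4*z2^4*q - p^5*tp*z1*z2*τp^4 + p^5*tp*z1*z2^2*τp^3 + p^5*tp*z1^2*z2*τp^3 - p^5*tp*z1^2*z2^2*τp^2 + (2)*p^5*tp*v*z1*z2^2*τp^3 - p^5*tp*v*z1*z2^3*τp^2 - p^5*tp*v*z1^2*z2^2*τp^2 - p^5*tp*v^2*z1*z2^3*τp^2 + (-2)*p^5*tp*v^2*z1^2*z2^2*τp^2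 + p^5*tp*v^2*z1^2*z2^3*τp + p^5*tp*v^2*z1^3*z2^2*τp + (2)*p^5*tp*v^3*z1^2*z2^3*τp - p^5*tp*v^4*z1^3*z2^3) * ht12 +
      (p^4*tp^4*z1^2*z2^2*q*τp*τ2 - p^5*tp^3*z1^2*z2^3*q*τp*τ2 - p^5*tp^3*z1^3*z2^2*q*τp*τ2 + (-2)*p^5*tp^3*v*z1^2*z2^3*q*τp*τ2 + p^5*tp^4*z1*z2*τp*τ2 + p^6*tp^2*z1^3*z2^3*q*τp*τ2 + p^6*tp^2*v*z1^2*z2^4*q*τp*τ2 + p^6*tp^2*v*z1^3*z2^3*q*τp*τ2 + p^6*tp^2*v^2*z1^2*z2^4*q*τp*τ2 + (2)*p^6*tp^2*v^2*z1^3*z2^3*q*τp*τ2 - p^6*tp^3*z1*z2^2*τp*τ2 - p^6*tp^3*z1^2*z2*τp*τ2 + (-2)*p^6*tp^3*v*z1*z2^2*τp*τ2 - p^7*tp*v^2*z1^3*z2^4*q*τp*τ2 - p^7*tp*v^2*z1^4*z2^3*q*τp*τ2 + (-2)*p^7*tp*v^3*z1^3*z2^4*q*τp*τ2 + p^7*tp^2*z1^2*z2^2*τp*τ2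 + p^7*tp^2*v*z1*z2^3*τp*τ2 + p^7*tp^2*v*z1^2*z2^2*τp*τ2 + p^7*tp^2*v^2*z1*z2^3*τp*τ2 + (2)*p^7*tp^2*v^2*z1^2*z2^2*τp*τ2 + p^8*v^4*z1^4*z2^4*q*τp*τ2 - p^8*tp*v^2*z1^2*z2^3*τp*τ2 - p^8*tp*v^2*z1^3*z2^2*τp*τ2 + (-2)*p^8*tp*v^3*z1^2*z2^3*τp*τ2 + p^9*v^4*z1^3*z2^3*τp*τ2) * hui +
      (p^3*tp^4*z1^2*z2^2*q*τp + p^3*tp^4*u*z1*z2*q*τp^3 - p^4*tp^3*z1^2*z2^3*q*τp - p^4*tp^3*z1^3*z2^2*q*τp - p^4*tp^3*u*z1*z2^2*q*τp^3 - p^4*tp^3*u*z1^2*z2*q*τp^3 + (-2)*p^4*tp^3*v*z1^2*z2^3*q*τp + (-2)*p^4*tp^3*v*u*z1*z2^2*q*τp^3 + p^4*tp^4*z1*z2*τp + p^4*tp^4*u*τp^3 + p^5*tp^2*z1^3*z2^3*q*τp + p^5*tp^2*u*z1^2*z2^2*q*τp^3 + p^5*tp^2*v*z1^2*z2^4*q*τp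 + p^5*tp^2*v*z1^3*z2^3*q*τp + p^5*tp^2*v*u*z1*z2^3*q*τp^3 + p^5*tp^2*v*u*z1^2*z2^2*q*τp^3 + p^5*tp^2*v^2*z1^2*z2^4*q*τp + (2)*p^5*tp^2*v^2*z1^3*z2^3*q*τp + p^5*tp^2*v^2*u*z1*z2^3*q*τp^3 + (2)*p^5*tp^2*v^2*u*z1^2*z2^2*q*τp^3 - p^5*tp^3*z1*z2^2*τp - p^5*tp^3*z1^2*z2*τp - p^5*tp^3*u*z2*τp^3 - p^5*tp^3*u*z1*τp^3 + (-2)*p^5*tp^3*v*z1*z2^2*τp + (-2)*p^5*tp^3*v*u*z2*τp^3 - p^6*tp*v^2*z1^3*z2^4*q*τp - p^6*tp*v^2*z1^4*z2^3*q*τp - p^6*tp*v^2*u*z1^2*z2^3*q*τp^3 - p^6*tp*v^2*u*z1^3*z2^2*q*τp^3 + (-2)*p^6*tp*v^3*z1^3*z2^4*q*τp + (-2)*p^6*tp*v^3*u*z1^2*z2^3*q*τp^3 + p^6*tp^2*z1^2*z2^2*τp + p^6*tp^2*u*z1*z2*τp^3 + p^6*tp^2*v*z1*z2^3*τp + p^6*tp^2*v*z1^2*z2^2*τp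 + p^6*tp^2*v*u*z2^2*τp^3 + p^6*tp^2*v*u*z1*z2*τp^3 + p^6*tp^2*v^2*z1*z2^3*τp + (2)*p^6*tp^2*v^2*z1^2*z2^2*τp + p^6*tp^2*v^2*u*z2^2*τp^3 + (2)*p^6*tp^2*v^2*u*z1*z2*τp^3 + p^7*v^4*z1^4*z2^4*q*τp + p^7*v^4*u*z1^3*z2^3*q*τp^3 - p^7*tp*v^2*z1^2*z2^3*τp - p^7*tp*v^2*z1^3*z2^2*τp - p^7*tp*v^2*u*z1*z2^2*τp^3 - p^7*tp*v^2*u*z1^2*z2*τp^3 + (-2)*p^7*tp*v^3*z1^2*z2^3*τp + (-2)*p^7*tp*v^3*u*z1*z2^2*τp^3 + p^8*v^4*z1^3*z2^3*τp + p^8*v^4*u*z1^2*z2^2*τp^3) * hτ2p +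
      (-p^3*tp^3*t2*z1^2*z2^2*q*τp - p^3*tp^3*t2*u*z1*z2*q*τp^3 - p^4*tp^2*t2*z1^2*z2^2*q*τp^2 + p^4*tp^2*t2*z1^2*z2^3*q*τp + p^4*tp^2*t2*z1^3*z2^2*q*τp + p^4*tp^2*t2*u*z1^2*z2^2*q*τp^2 + (2)*p^4*tp^2*t2*v*z1^2*z2^3*q*τp + p^4*tp^2*t2*v*u*z1*z2^3*q*τp^2 + p^4*tp^2*t2*v*u*z1^2*z2^2*q*τp^2 + p^4*tp^2*t2*v^2*u*z1*z2^3*q*τp^2 + (2)*p^4*tp^2*t2*v^2*u*z1^2*z2^2*q*τp^2 - p^4*tp^2*t2*v^2*u*z1^2*z2^3*q*τp - p^4*tp^2*t2*v^2*u*z1^3*z2^2*q*τp + (-2)*p^4*tp^2*t2*v^3*u*z1^2*z2^3*q*τp + p^4*tp^2*t2*v^4*u*z1^3*z2^3*q - p^4*tp^3*t2*z1*z2*τp - p^4*tp^3*t2*u*τp^3 - p^5*tp*t2*z1^2*z2^2*q*τp^3 + p^5*tp*t2*z1^2*z2^3*q*τp^2 + p^5*tp*t2*z1^3*z2^2*q*τp^2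 - p^5*tp*t2*z1^3*z2^3*q*τp + (2)*p^5*tp*t2*v*z1^2*z2^3*q*τp^2 - p^5*tp*t2*v*z1^2*z2^4*q*τp - p^5*tp*t2*v*z1^3*z2^3*q*τp - p^5*tp*t2*v^2*z1^2*z2^4*q*τp + (-2)*p^5*tp*t2*v^2*z1^3*z2^3*q*τp - p^5*tp*t2*v^2*u*z1^2*z2^3*q*τp^2 - p^5*tp*t2*v^2*u*z1^3*z2^2*q*τp^2 + (-2)*p^5*tp*t2*v^3*u*z1^2*z2^3*q*τp^2 + p^5*tp*t2*v^4*u*z1^3*z2^3*q*τp - p^5*tp^2*t2*z1*z2*τp^2 + p^5*tp^2*t2*z1*z2^2*τp + p^5*tp^2*t2*z1^2*z2*τp + p^5*tp^2*t2*u*z1*z2*τp^2 + (2)*p^5*tp^2*t2*v*z1*z2^2*τp + p^5*tp^2*t2*v*u*z2^2*τp^2 + p^5*tp^2*t2*v*u*z1*z2*τp^2 + p^5*tp^2*t2*v^2*u*z2^2*τp^2 + (2)*p^5*tp^2*t2*v^2*u*z1*z2*τp^2 - p^5*tp^2*t2*v^2*u*z1*z2^2*τp - p^5*tp^2*t2*v^2*u*z1^2*z2*τp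 + (-2)*p^5*tp^2*t2*v^3*u*z1*z2^2*τp + p^5*tp^2*t2*v^4*u*z1^2*z2^2 + p^6*t2*v^4*z1^4*z2^4*q + p^6*t2*v^4*u*z1^3*z2^3*q*τp^2 - p^6*tp*t2*z1*z2*τp^3 + p^6*tp*t2*z1*z2^2*τp^2 + p^6*tp*t2*z1^2*z2*τp^2 - p^6*tp*t2*z1^2*z2^2*τp + (2)*p^6*tp*t2*v*z1*z2^2*τp^2 - p^6*tp*t2*v*z1*z2^3*τp - p^6*tp*t2*v*z1^2*z2^2*τp - p^6*tp*t2*v^2*z1*z2^3*τp + (-2)*p^6*tp*t2*v^2*z1^2*z2^2*τp - p^6*tp*t2*v^2*u*z1*z2^2*τp^2 - p^6*tp*t2*v^2*u*z1^2*z2*τp^2 + (-2)*p^6*tp*t2*v^3*u*z1*z2^2*τp^2 + p^6*tp*t2*v^4*u*z1^2*z2^2*τp + p^7*t2*v^4*z1^3*z2^3 + p^7*t2*v^4*u*z1^2*z2^2*τp^2) * hτpp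
  · intro z1 z2 hL hD1 hD2
    have hL12 := hL3 z1 z2
    have hL21 := hL3 z2 z1
    constructor
    · rw [Sc, neg_inj, div_eq_div_iff hL (mul_ne_zero hD1 hD2)]
      apply mul_left_cancel₀ (show (p ^ 8 * tp ^ 3 : ℂ) ≠ 0 from
        mul_ne_zero (pow_ne_zero _ hp) (pow_ne_zero _ htp))
      linear_combination
        (p^8*τp^4 - p^8*z2*τp^3 - p^8*z1*τp^3 + p^8*z1*z2*τp^2 + (-2)*p^8*v*z1*τp^3 + p^8*v*z1*z2*τp^2 + p^8*v*z1^2*τp^2 + (2)*p^8*v^2*z1*z2*τp^2 - p^8*v^2*z1*z2^2*τp + p^8*v^2*z1^2*τp^2 - p^8*v^2*z1^2*z2*τp + (-2)*p^8*v^3*z1^2*z2*τp + p^8*v^4*z1^2*z2^2) * hL12 +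
        (-p^8*τp^4 + p^8*z2*τp^3 + p^8*z1*τp^3 - p^8*z1*z2*τp^2 + (2)*p^8*v*z2*τp^3 - p^8*v*z2^2*τp^2 - p^8*v*z1*z2*τp^2 - p^8*v^2*z2^2*τp^2 + (-2)*p^8*v^2*z1*z2*τp^2 + p^8*v^2*z1*z2^2*τp + p^8*v^2*z1^2*z2*τp + (2)*p^8*v^3*z1*z2^2*τp - p^8*v^4*z1^2*z2^2) * hL21 +
        ((-2)*p^8*tp^3*v*z1*z2^2*q*τp^3 + p^8*tp^3*v*z1*z2^3*q*τp^2 + (2)*p^8*tp^3*v*z1^2*z2*q*τp^3 - p^8*tp^3*v*z1^3*z2*q*τp^2 + p^8*tp^3*v^2*z1*z2^3*q*τp^2 - p^8*tp^3*v^2*z1^3*z2*q*τp^2 + (-2)*p^8*tp^3*v^3*z1^2*z2^3*q*τp + (2)*p^8*tp^3*v^3*z1^3*z2^2*q*τp + p^9*tp^2*v*z1*z2^3*q*τp^3 - p^9*tp^2*v*z1*z2^4*q*τp^2 + p^9*tp^2*v*z1^2*z2^3*q*τp^2 - p^9*tp^2*v*z1^3*z2*q*τp^3 - p^9*tp^2*v*z1^3*z2^2*q*τp^2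 + p^9*tp^2*v*z1^4*z2*q*τp^2 + p^9*tp^2*v^2*z1*z2^3*q*τp^3 - p^9*tp^2*v^2*z1*z2^4*q*τp^2 - p^9*tp^2*v^2*z1^2*z2^3*q*τp^2 - p^9*tp^2*v^2*z1^3*z2*q*τp^3 + p^9*tp^2*v^2*z1^3*z2^2*q*τp^2 + p^9*tp^2*v^2*z1^4*z2*q*τp^2 + (2)*p^9*tp^2*v^5*z1^3*z2^4*q + (-2)*p^9*tp^2*v^5*z1^4*z2^3*q + (-2)*p^9*tp^3*v*z2*τp^3 + p^9*tp^3*v*z2^2*τp^2 + (2)*p^9*tp^3*v*z1*τp^3 - p^9*tp^3*v*z1^2*τp^2 + p^9*tp^3*v^2*z2^2*τp^2 - p^9*tp^3*v^2*z1^2*τp^2 + (-2)*p^9*tp^3*v^3*z1*z2^2*τp + (2)*p^9*tp^3*v^3*z1^2*z2*τp + (-2)*p^10*tp*v^3*z1^2*z2^3*q*τp^3 + p^10*tp*v^3*z1^2*z2^5*q*τp + (2)*p^10*tp*v^3*z1^3*z2^2*q*τp^3 - p^10*tp*v^3*z1^3*z2^4*q*τp + p^10*tp*v^3*z1^4*z2^3*q*τp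 - p^10*tp*v^3*z1^5*z2^2*q*τp + p^10*tp*v^4*z1^2*z2^5*q*τp + p^10*tp*v^4*z1^3*z2^4*q*τp - p^10*tp*v^4*z1^4*z2^3*q*τp - p^10*tp*v^4*z1^5*z2^2*q*τp - p^10*tp*v^5*z1^3*z2^5*q + p^10*tp*v^5*z1^5*z2^3*q - p^10*tp*v^6*z1^3*z2^5*q + p^10*tp*v^6*z1^5*z2^3*q + p^10*tp^2*v*z2^2*τp^3 - p^10*tp^2*v*z2^3*τp^2 + p^10*tp^2*v*z1*z2^2*τp^2 - p^10*tp^2*v*z1^2*τp^3 - p^10*tp^2*v*z1^2*z2*τp^2 + p^10*tp^2*v*z1^3*τp^2 + p^10*tp^2*v^2*z2^2*τp^3 - p^10*tp^2*v^2*z2^3*τp^2 - p^10*tp^2*v^2*z1*z2^2*τp^2 - p^10*tp^2*v^2*z1^2*τp^3 + p^10*tp^2*v^2*z1^2*z2*τp^2 + p^10*tp^2*v^2*z1^3*τp^2 + (2)*p^10*tp^2*v^5*z1^2*z2^3 + (-2)*p^10*tp^2*v^5*z1^3*z2^2 + (2)*p^11*v^5*z1^3*z2^4*q*τp^2 - p^11*v^5*z1^3*z2^5*q*τp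 + (-2)*p^11*v^5*z1^4*z2^3*q*τp^2 + p^11*v^5*z1^5*z2^3*q*τp - p^11*v^6*z1^3*z2^5*q*τp + p^11*v^6*z1^5*z2^3*q*τp + (2)*p^11*v^7*z1^4*z2^5*q + (-2)*p^11*v^7*z1^5*z2^4*q + (-2)*p^11*tp*v^3*z1*z2^2*τp^3 + p^11*tp*v^3*z1*z2^4*τp + (2)*p^11*tp*v^3*z1^2*z2*τp^3 - p^11*tp*v^3*z1^2*z2^3*τp + p^11*tp*v^3*z1^3*z2^2*τp - p^11*tp*v^3*z1^4*z2*τp + p^11*tp*v^4*z1*z2^4*τp + p^11*tp*v^4*z1^2*z2^3*τp - p^11*tp*v^4*z1^3*z2^2*τp - p^11*tp*v^4*z1^4*z2*τp - p^11*tp*v^5*z1^2*z2^4 + p^11*tp*v^5*z1^4*z2^2 - p^11*tp*v^6*z1^2*z2^4 + p^11*tp*v^6*z1^4*z2^2 + (2)*p^12*v^5*z1^2*z2^3*τp^2 - p^12*v^5*z1^2*z2^4*τp + (-2)*p^12*v^5*z1^3*z2^2*τp^2 + p^12*v^5*z1^4*z2^2*τp - p^12*v^6*z1^2*z2^4*τp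 + p^12*v^6*z1^4*z2^2*τp + (2)*p^12*v^7*z1^3*z2^4 + (-2)*p^12*v^7*z1^4*z2^3) * hτpp
    · rw [Nc, div_eq_div_iff (mul_ne_zero two_ne_zero hL)
        (mul_ne_zero (mul_ne_zero two_ne_zero hD1) hD2)]
      apply mul_left_cancel₀ (show (p ^ 8 * u * tp ^ 3 : ℂ) ≠ 0 from
        mul_ne_zero (mul_ne_zero (pow_ne_zero _ hp) hu0) (pow_ne_zero _ htp))
      linear_combination
        ((2)*p^8*u*z2*τp^3*τ2 + (-2)*p^8*u*z1*τp^3*τ2 + (2)*p^8*u*z1*z2^2*τp*τ2*u⁻¹ + (-2)*p^8*u*z1^2*z2*τp*τ2*u⁻¹) * hL21 +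
        ((-2)*p^8*tp*z1^2*z2^3*q*τp^4 + (2)*p^8*tp*z1^2*z2^4*q*τp^3 + (2)*p^8*tp*z1^3*z2^2*q*τp^4 + (-2)*p^8*tp*z1^3*z2^4*q*τp^2 + (-2)*p^8*tp*z1^4*z2^2*q*τp^3 + (2)*p^8*tp*z1^4*z2^3*q*τp^2 + (4)*p^8*tp*v*z1^3*z2^3*q*τp^3 + (-2)*p^8*tp*v*z1^3*z2^4*q*τp^2 + (-4)*p^8*tp*v*z1^4*z2^2*q*τp^3 + (2)*p^8*tp*v*z1^5*z2^2*q*τp^2 + (-4)*p^8*tp*v^2*z1^3*z2^4*q*τp^2 + (2)*p^8*tp*v^2*z1^3*z2^5*q*τp + (2)*p^8*tp*v^2*z1^4*z2^3*q*τp^2 + (2)*p^8*tp*v^2*z1^5*z2^2*q*τp^2 + (-2)*p^8*tp*v^2*z1^5*z2^3*q*τp + (4)*p^8*tp*v^3*z1^4*z2^4*q*τp + (-4)*p^8*tp*v^3*z1^5*z2^3*q*τp + (-2)*p^8*tp*v^4*z1^4*z2^5*q + (2)*p^8*tp*v^4*z1^5*z2^4*q + (-2)*p^9*tp*z1*z2^2*τp^4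 + (2)*p^9*tp*z1*z2^3*τp^3 + (2)*p^9*tp*z1^2*z2*τp^4 + (-2)*p^9*tp*z1^2*z2^3*τp^2 + (-2)*p^9*tp*z1^3*z2*τp^3 + (2)*p^9*tp*z1^3*z2^2*τp^2 + (4)*p^9*tp*v*z1^2*z2^2*τp^3 + (-2)*p^9*tp*v*z1^2*z2^3*τp^2 + (-4)*p^9*tp*v*z1^3*z2*τp^3 + (2)*p^9*tp*v*z1^4*z2*τp^2 + (-4)*p^9*tp*v^2*z1^2*z2^3*τp^2 + (2)*p^9*tp*v^2*z1^2*z2^4*τp + (2)*p^9*tp*v^2*z1^3*z2^2*τp^2 + (2)*p^9*tp*v^2*z1^4*z2*τp^2 + (-2)*p^9*tp*v^2*z1^4*z2^2*τp + (4)*p^9*tp*v^3*z1^3*z2^3*τp + (-4)*p^9*tp*v^3*z1^4*z2^2*τp + (-2)*p^9*tp*v^4*z1^3*z2^4 + (2)*p^9*tp*v^4*z1^4*z2^3) * ht12 +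
        ((2)*p^8*tp^4*z1^2*z2^3*q*τp*τ2 + (-2)*p^8*tp^4*z1^3*z2^2*q*τp*τ2 + (-2)*p^9*tp^3*z1^2*z2^4*q*τp*τ2 + (2)*p^9*tp^3*z1^4*z2^2*q*τp*τ2 + (-4)*p^9*tp^3*v*z1^3*z2^3*q*τp*τ2 + (4)*p^9*tp^3*v*z1^4*z2^2*q*τp*τ2 + (2)*p^9*tp^4*z1*z2^2*τp*τ2 + (-2)*p^9*tp^4*z1^2*z2*τp*τ2 + (2)*p^10*tp^2*z1^3*z2^4*q*τp*τ2 + (-2)*p^10*tp^2*z1^4*z2^3*q*τp*τ2 + (2)*p^10*tp^2*v*z1^3*z2^4*q*τp*τ2 + (-2)*p^10*tp^2*v*z1^5*z2^2*q*τp*τ2 + (4)*p^10*tp^2*v^2*z1^3*z2^4*q*τp*τ2 + (-2)*p^10*tp^2*v^2*z1^4*z2^3*q*τp*τ2 + (-2)*p^10*tp^2*v^2*z1^5*z2^2*q*τp*τ2 + (-2)*p^10*tp^3*z1*z2^3*τp*τ2 + (2)*p^10*tp^3*z1^3*z2*τp*τ2 + (-4)*p^10*tp^3*v*z1^2*z2^2*τp*τ2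 + (4)*p^10*tp^3*v*z1^3*z2*τp*τ2 + (-2)*p^11*tp*v^2*z1^3*z2^5*q*τp*τ2 + (2)*p^11*tp*v^2*z1^5*z2^3*q*τp*τ2 + (-4)*p^11*tp*v^3*z1^4*z2^4*q*τp*τ2 + (4)*p^11*tp*v^3*z1^5*z2^3*q*τp*τ2 + (2)*p^11*tp^2*z1^2*z2^3*τp*τ2 + (-2)*p^11*tp^2*z1^3*z2^2*τp*τ2 + (2)*p^11*tp^2*v*z1^2*z2^3*τp*τ2 + (-2)*p^11*tp^2*v*z1^4*z2*τp*τ2 + (4)*p^11*tp^2*v^2*z1^2*z2^3*τp*τ2 + (-2)*p^11*tp^2*v^2*z1^3*z2^2*τp*τ2 + (-2)*p^11*tp^2*v^2*z1^4*z2*τp*τ2 + (2)*p^12*v^4*z1^4*z2^5*q*τp*τ2 + (-2)*p^12*v^4*z1^5*z2^4*q*τp*τ2 + (-2)*p^12*tp*v^2*z1^2*z2^4*τp*τ2 + (2)*p^12*tp*v^2*z1^4*z2^2*τp*τ2 + (-4)*p^12*tp*v^3*z1^3*z2^3*τp*τ2 + (4)*p^12*tp*v^3*z1^4*z2^2*τp*τ2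 + (2)*p^13*v^4*z1^3*z2^4*τp*τ2 + (-2)*p^13*v^4*z1^4*z2^3*τp*τ2) * hui +
        ((2)*p^7*tp^4*z1^2*z2^3*q*τp + (-2)*p^7*tp^4*z1^3*z2^2*q*τp + (2)*p^7*tp^4*u*z1*z2^2*q*τp^3 + (-2)*p^7*tp^4*u*z1^2*z2*q*τp^3 + (-2)*p^8*tp^3*z1^2*z2^4*q*τp + (2)*p^8*tp^3*z1^4*z2^2*q*τp + (-2)*p^8*tp^3*u*z1*z2^3*q*τp^3 + (2)*p^8*tp^3*u*z1^3*z2*q*τp^3 + (-4)*p^8*tp^3*v*z1^3*z2^3*q*τp + (4)*p^8*tp^3*v*z1^4*z2^2*q*τp + (-4)*p^8*tp^3*v*u*z1^2*z2^2*q*τp^3 + (4)*p^8*tp^3*v*u*z1^3*z2*q*τp^3 + (2)*p^8*tp^4*z1*z2^2*τp + (-2)*p^8*tp^4*z1^2*z2*τp + (2)*p^8*tp^4*u*z2*τp^3 + (-2)*p^8*tp^4*u*z1*τp^3 + (2)*p^9*tp^2*z1^3*z2^4*q*τp + (-2)*p^9*tp^2*z1^4*z2^3*q*τp + (2)*p^9*tp^2*u*z1^2*z2^3*q*τp^3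 + (-2)*p^9*tp^2*u*z1^3*z2^2*q*τp^3 + (2)*p^9*tp^2*v*z1^3*z2^4*q*τp + (-2)*p^9*tp^2*v*z1^5*z2^2*q*τp + (2)*p^9*tp^2*v*u*z1^2*z2^3*q*τp^3 + (-2)*p^9*tp^2*v*u*z1^4*z2*q*τp^3 + (4)*p^9*tp^2*v^2*z1^3*z2^4*q*τp + (-2)*p^9*tp^2*v^2*z1^4*z2^3*q*τp + (-2)*p^9*tp^2*v^2*z1^5*z2^2*q*τp + (4)*p^9*tp^2*v^2*u*z1^2*z2^3*q*τp^3 + (-2)*p^9*tp^2*v^2*u*z1^3*z2^2*q*τp^3 + (-2)*p^9*tp^2*v^2*u*z1^4*z2*q*τp^3 + (-2)*p^9*tp^3*z1*z2^3*τp + (2)*p^9*tp^3*z1^3*z2*τp + (-2)*p^9*tp^3*u*z2^2*τp^3 + (2)*p^9*tp^3*u*z1^2*τp^3 + (-4)*p^9*tp^3*v*z1^2*z2^2*τp + (4)*p^9*tp^3*v*z1^3*z2*τp + (-4)*p^9*tp^3*v*u*z1*z2*τp^3 + (4)*p^9*tp^3*v*u*z1^2*τp^3 + (-2)*p^10*tp*v^2*z1^3*z2^5*q*τp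 + (2)*p^10*tp*v^2*z1^5*z2^3*q*τp + (-2)*p^10*tp*v^2*u*z1^2*z2^4*q*τp^3 + (2)*p^10*tp*v^2*u*z1^4*z2^2*q*τp^3 + (-4)*p^10*tp*v^3*z1^4*z2^4*q*τp + (4)*p^10*tp*v^3*z1^5*z2^3*q*τp + (-4)*p^10*tp*v^3*u*z1^3*z2^3*q*τp^3 + (4)*p^10*tp*v^3*u*z1^4*z2^2*q*τp^3 + (2)*p^10*tp^2*z1^2*z2^3*τp + (-2)*p^10*tp^2*z1^3*z2^2*τp + (2)*p^10*tp^2*u*z1*z2^2*τp^3 + (-2)*p^10*tp^2*u*z1^2*z2*τp^3 + (2)*p^10*tp^2*v*z1^2*z2^3*τp + (-2)*p^10*tp^2*v*z1^4*z2*τp + (2)*p^10*tp^2*v*u*z1*z2^2*τp^3 + (-2)*p^10*tp^2*v*u*z1^3*τp^3 + (4)*p^10*tp^2*v^2*z1^2*z2^3*τp + (-2)*p^10*tp^2*v^2*z1^3*z2^2*τp + (-2)*p^10*tp^2*v^2*z1^4*z2*τp + (4)*p^10*tp^2*v^2*u*z1*z2^2*τp^3 + (-2)*p^10*tp^2*v^2*u*z1^2*z2*τp^3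 + (-2)*p^10*tp^2*v^2*u*z1^3*τp^3 + (2)*p^11*v^4*z1^4*z2^5*q*τp + (-2)*p^11*v^4*z1^5*z2^4*q*τp + (2)*p^11*v^4*u*z1^3*z2^4*q*τp^3 + (-2)*p^11*v^4*u*z1^4*z2^3*q*τp^3 + (-2)*p^11*tp*v^2*z1^2*z2^4*τp + (2)*p^11*tp*v^2*z1^4*z2^2*τp + (-2)*p^11*tp*v^2*u*z1*z2^3*τp^3 + (2)*p^11*tp*v^2*u*z1^3*z2*τp^3 + (-4)*p^11*tp*v^3*z1^3*z2^3*τp + (4)*p^11*tp*v^3*z1^4*z2^2*τp + (-4)*p^11*tp*v^3*u*z1^2*z2^2*τp^3 + (4)*p^11*tp*v^3*u*z1^3*z2*τp^3 + (2)*p^12*v^4*z1^3*z2^4*τp + (-2)*p^12*v^4*z1^4*z2^3*τp + (2)*p^12*v^4*u*z1^2*z2^3*τp^3 + (-2)*p^12*v^4*u*z1^3*z2^2*τp^3) * hτ2p +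
        ((-2)*p^7*tp^3*t2*z1^2*z2^3*q*τp + (2)*p^7*tp^3*t2*z1^3*z2^2*q*τp + (-2)*p^7*tp^3*t2*u*z1*z2^2*q*τp^3 + (2)*p^7*tp^3*t2*u*z1^2*z2*q*τp^3 + (-2)*p^8*tp^2*t2*z1^2*z2^3*q*τp^2 + (2)*p^8*tp^2*t2*z1^2*z2^4*q*τp + (2)*p^8*tp^2*t2*z1^3*z2^2*q*τp^2 + (-2)*p^8*tp^2*t2*z1^4*z2^2*q*τp + (2)*p^8*tp^2*t2*u*z1^2*z2^3*q*τp^2 + (-2)*p^8*tp^2*t2*u*z1^3*z2^2*q*τp^2 + (4)*p^8*tp^2*t2*v*z1^3*z2^3*q*τp + (-4)*p^8*tp^2*t2*v*z1^4*z2^2*q*τp + (2)*p^8*tp^2*t2*v*u*z1^2*z2^3*q*τp^2 + (-2)*p^8*tp^2*t2*v*u*z1^4*z2*q*τp^2 + (4)*p^8*tp^2*t2*v^2*u*z1^2*z2^3*q*τp^2 + (-2)*p^8*tp^2*t2*v^2*u*z1^2*z2^4*q*τp + (-2)*p^8*tp^2*t2*v^2*u*z1^3*z2^2*q*τp^2 +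 (-2)*p^8*tp^2*t2*v^2*u*z1^4*z2*q*τp^2 + (2)*p^8*tp^2*t2*v^2*u*z1^4*z2^2*q*τp + (-4)*p^8*tp^2*t2*v^3*u*z1^3*z2^3*q*τp + (4)*p^8*tp^2*t2*v^3*u*z1^4*z2^2*q*τp + (2)*p^8*tp^2*t2*v^4*u*z1^3*z2^4*q + (-2)*p^8*tp^2*t2*v^4*u*z1^4*z2^3*q + (-2)*p^8*tp^3*t2*z1*z2^2*τp + (2)*p^8*tp^3*t2*z1^2*z2*τp + (-2)*p^8*tp^3*t2*u*z2*τp^3 + (2)*p^8*tp^3*t2*u*z1*τp^3 + (-2)*p^9*tp*t2*z1^2*z2^3*q*τp^3 + (2)*p^9*tp*t2*z1^2*z2^4*q*τp^2 + (2)*p^9*tp*t2*z1^3*z2^2*q*τp^3 + (-2)*p^9*tp*t2*z1^3*z2^4*q*τp + (-2)*p^9*tp*t2*z1^4*z2^2*q*τp^2 + (2)*p^9*tp*t2*z1^4*z2^3*q*τp + (4)*p^9*tp*t2*v*z1^3*z2^3*q*τp^2 + (-2)*p^9*tp*t2*v*z1^3*z2^4*q*τp + (-4)*p^9*tp*t2*v*z1^4*z2^2*q*τp^2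 + (2)*p^9*tp*t2*v*z1^5*z2^2*q*τp + (-4)*p^9*tp*t2*v^2*z1^3*z2^4*q*τp + (2)*p^9*tp*t2*v^2*z1^4*z2^3*q*τp + (2)*p^9*tp*t2*v^2*z1^5*z2^2*q*τp + (-2)*p^9*tp*t2*v^2*u*z1^2*z2^4*q*τp^2 + (2)*p^9*tp*t2*v^2*u*z1^4*z2^2*q*τp^2 + (-4)*p^9*tp*t2*v^3*u*z1^3*z2^3*q*τp^2 + (4)*p^9*tp*t2*v^3*u*z1^4*z2^2*q*τp^2 + (2)*p^9*tp*t2*v^4*u*z1^3*z2^4*q*τp + (-2)*p^9*tp*t2*v^4*u*z1^4*z2^3*q*τp + (-2)*p^9*tp^2*t2*z1*z2^2*τp^2 + (2)*p^9*tp^2*t2*z1*z2^3*τp + (2)*p^9*tp^2*t2*z1^2*z2*τp^2 + (-2)*p^9*tp^2*t2*z1^3*z2*τp + (2)*p^9*tp^2*t2*u*z1*z2^2*τp^2 + (-2)*p^9*tp^2*t2*u*z1^2*z2*τp^2 + (4)*p^9*tp^2*t2*v*z1^2*z2^2*τp + (-4)*p^9*tp^2*t2*v*z1^3*z2*τp +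 (2)*p^9*tp^2*t2*v*u*z1*z2^2*τp^2 + (-2)*p^9*tp^2*t2*v*u*z1^3*τp^2 + (4)*p^9*tp^2*t2*v^2*u*z1*z2^2*τp^2 + (-2)*p^9*tp^2*t2*v^2*u*z1*z2^3*τp + (-2)*p^9*tp^2*t2*v^2*u*z1^2*z2*τp^2 + (-2)*p^9*tp^2*t2*v^2*u*z1^3*τp^2 + (2)*p^9*tp^2*t2*v^2*u*z1^3*z2*τp + (-4)*p^9*tp^2*t2*v^3*u*z1^2*z2^2*τp + (4)*p^9*tp^2*t2*v^3*u*z1^3*z2*τp + (2)*p^9*tp^2*t2*v^4*u*z1^2*z2^3 + (-2)*p^9*tp^2*t2*v^4*u*z1^3*z2^2 + (2)*p^10*t2*v^4*z1^4*z2^5*q + (-2)*p^10*t2*v^4*z1^5*z2^4*q + (2)*p^10*t2*v^4*u*z1^3*z2^4*q*τp^2 + (-2)*p^10*t2*v^4*u*z1^4*z2^3*q*τp^2 + (-2)*p^10*tp*t2*z1*z2^2*τp^3 + (2)*p^10*tp*t2*z1*z2^3*τp^2 + (2)*p^10*tp*t2*z1^2*z2*τp^3 + (-2)*p^10*tp*t2*z1^2*z2^3*τp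 + (-2)*p^10*tp*t2*z1^3*z2*τp^2 + (2)*p^10*tp*t2*z1^3*z2^2*τp + (4)*p^10*tp*t2*v*z1^2*z2^2*τp^2 + (-2)*p^10*tp*t2*v*z1^2*z2^3*τp + (-4)*p^10*tp*t2*v*z1^3*z2*τp^2 + (2)*p^10*tp*t2*v*z1^4*z2*τp + (-4)*p^10*tp*t2*v^2*z1^2*z2^3*τp + (2)*p^10*tp*t2*v^2*z1^3*z2^2*τp + (2)*p^10*tp*t2*v^2*z1^4*z2*τp + (-2)*p^10*tp*t2*v^2*u*z1*z2^3*τp^2 + (2)*p^10*tp*t2*v^2*u*z1^3*z2*τp^2 + (-4)*p^10*tp*t2*v^3*u*z1^2*z2^2*τp^2 + (4)*p^10*tp*t2*v^3*u*z1^3*z2*τp^2 + (2)*p^10*tp*t2*v^4*u*z1^2*z2^3*τp + (-2)*p^10*tp*t2*v^4*u*z1^3*z2^2*τp + (2)*p^11*t2*v^4*z1^3*z2^4 + (-2)*p^11*t2*v^4*z1^4*z2^3 + (2)*p^11*t2*v^4*u*z1^2*z2^3*τp^2 + (-2)*p^11*t2*v^4*u*z1^3*z2^2*τp^2) * hτ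pp
end
end

section
/- For the generalized Bariev (gB) parameter family, the amplitude Λ satisfies the factorization: for all complex z1, z2, τp·μ²·Λ(z1,z2) = p²·(1 + θ·z1z2)·Λ̃(z1,z2), where Λ̃(z1,z2) = J·μ⁴·τp²·z1²z2² − μ²·τp·θ·z1z2·(z1+z2) − J²·μ³·τp·z1·z2² + (μ−θ)·(μ−J²·θ)·z1z2 + J²·μ³·τp²·z2² − μ²·τp·(z1+z2) − J·μ·τp·θ·z2 + μ²·τp². Consequently, wherever the denominators are nonzero, S(z1,z2) = −Λ̃(z1,z2)/Λ̃(z2,z1) and N(z1,z2) = τ2·τp·μ²·(z1−z2)·(1+μ·z1z2)/(2·Λ̃(z2,z1)). -/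
set_option maxHeartbeats 1000000


noncomputable section

/-- The factorized amplitude `Λ̃` of the generalized Bariev model. -/
def LamB (J μ τp θ z1 z2 : ℂ) : ℂ :=
  J * μ ^ 4 * τp ^ 2 * z1 ^ 2 * z2 ^ 2 - μ ^ 2 * τp * θ * z1 * z2 * (z1 + z2) -
    J ^ 2 * μ ^ 3 * τp * z1 * z2 ^ 2 + (μ - θ) * (μ - J ^ 2 * θ) * z1 * z2 +
    J ^ 2 * μ ^ 3 * τp ^ 2 * z2 ^ 2 - μ ^ 2 * τp * (z1 + z2) - J * μ * τp * θ * z2 +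
    μ ^ 2 * τp ^ 2

/-- Factorization of `Λ` and the resulting `S` and `N` for the generalized
Bariev model. -/
theorem statement11 (p q t1 t2 tp J : ℂ)
    (hp : p ≠ 0) (hq : q ≠ 0) (ht1 : t1 ≠ 0) (ht2 : t2 ≠ 0) (htp : tp ≠ 0)
    (hJ : J ^ 2 + J + 1 = 0)
    (s1 s2 sp X11 Y τp τ2 θ μ : ℂ)
    (hs1 : s1 = J * (J * t1 ^ 2 * tp ^ 2 - p * q * t2 ^ 2) / (t1 * t2 ^ 2))
    (hs2 : s2 = J ^ 2 * (J * t1 ^ 2 * tp ^ 2 - p * q * t2 ^ 2) / t2 ^ 3)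
    (hsp : sp = J * t1 ^ 2 * tp / t2 ^ 2)
    (hX11 : X11 = J ^ 2 * t1 * tp / t2)
    (hY : Y = (p ^ 2 * t1 ^ 2 * t2 + J * p * q * t1 * t2 ^ 2 + J ^ 2 * q ^ 2 * t2 ^ 3 -
        J ^ 2 * t1 ^ 3 * tp ^ 2) / (t1 ^ 2 * t2 * tp))
    (hτp : τp = tp / p) (hτ2 : τ2 = t2 / p) (hθ : θ = q / p) (hμ : μ = t1 / t2) :
    (∀ z1 z2 : ℂ,
      τp * μ ^ 2 * Lam p q t1 t2 s1 s2 tp sp X11 Y z1 z2 =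
        p ^ 2 * (1 + θ * z1 * z2) * LamB J μ τp θ z1 z2) ∧
    ∀ z1 z2 : ℂ, Lam p q t1 t2 s1 s2 tp sp X11 Y z2 z1 ≠ 0 →
      Sc p q t1 t2 s1 s2 tp sp X11 Y z1 z2 =
          -(LamB J μ τp θ z1 z2 / LamB J μ τp θ z2 z1) ∧
      Nc p q t1 t2 s1 s2 tp sp X11 Y z1 z2 =
          τ2 * τp * μ ^ 2 * (z1 - z2) * (1 + μ * z1 * z2) /
            (2 * LamB J μ τp θ z2 z1) := by
  have hτpne : τp ≠ 0 := by rw [hτp]; exact div_ne_zero htp hp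
  have hμne : μ ≠ 0 := by rw [hμ]; exact div_ne_zero ht1 ht2
  have eX : X11 * t2 = J ^ 2 * t1 * tp := by rw [hX11]; field_simp
  have eY : Y * (t1 ^ 2 * t2 * tp) = p ^ 2 * t1 ^ 2 * t2 + J * p * q * t1 * t2 ^ 2 +
      J ^ 2 * q ^ 2 * t2 ^ 3 - J ^ 2 * t1 ^ 3 * tp ^ 2 := by rw [hY]; field_simp
  have esp : sp * t2 ^ 2 = J * t1 ^ 2 * tp := by rw [hsp]; field_simp
  have es1 : s1 * (t1 * t2 ^ 2) = J * (J * t1 ^ 2 * tp ^ 2 - p * q * t2 ^ 2) := by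
    rw [hs1]; field_simp
  have es2 : s2 * t2 ^ 3 = J ^ 2 * (J * t1 ^ 2 * tp ^ 2 - p * q * t2 ^ 2) := by
    rw [hs2]; field_simp
  have etp : tp = τp * p := by rw [hτp]; field_simp
  have eq2 : q = θ * p := by rw [hθ]; field_simp
  have et1 : t1 = μ * t2 := by rw [hμ]; field_simp
  have eτ2 : τ2 * p = t2 := by rw [hτ2]; field_simp
  have hmain : ∀ z1 z2 : ℂ,
      τp * μ ^ 2 * Lam p q t1 t2 s1 s2 tp sp X11 Y z1 z2 =
        p ^ 2 * (1 + θ * z1 * z2) * LamB J μ τp θ z1 z2 := by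
    intro z1 z2
    have hF : p ^ 3 * t1 ^ 2 * t2 ^ 6 * tp ≠ 0 := by
      exact mul_ne_zero (mul_ne_zero (mul_ne_zero (pow_ne_zero 3 hp) (pow_ne_zero 2 ht1))
        (pow_ne_zero 6 ht2)) htp
    refine mul_left_cancel₀ hF ?_
    unfold Lam LamB
    linear_combination
      (- p ^ 3 * t1 ^ 2 * t2 ^ 5 * tp * z1 * z2 ^ 2 * Y * τp * μ ^ 2 - p ^ 3 * t1 ^ 2 * t2 ^ 5 * tp * z1 ^ 2 * z2 ^ 3 * sp * τp * μ ^ 2 - p ^ 3 * t1 ^ 2 * t2 ^ 5 * tp ^ 2 * z2 * τp * μ ^ 2 + p ^ 3 * q * t1 ^ 2 * t2 ^ 5 * tp * z1 * z2 ^ 3 * τp * μ ^ 2 + p ^ 3 * q * t1 ^ 2 * t2 ^ 5 * tp * z1 ^ 2 * z2 ^ 2 * τp * μ ^ 2 + p ^ 4 * t1 ^ 2 * t2 ^ 5 * tp * z2 ^ 2 * τp * μ ^ 2 + p ^ 4 * t1 ^ 2 * t2 ^ 5 * tp * z1 * z2 * τp * μ ^ 2) * eX +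
      (- p ^ 3 * t1 * t2 ^ 4 * tp * J ^ 2 * z1 * z2 ^ 2 * τp * μ ^ 2 + p ^ 3 * q * t2 ^ 5 * z1 ^ 2 * z2 ^ 2 * τp * μ ^ 2 + p ^ 4 * t2 ^ 5 * z1 * z2 * τp * μ ^ 2) * eY +
      (- p ^ 3 * t1 ^ 3 * t2 ^ 3 * tp ^ 2 * J ^ 2 * z1 ^ 2 * z2 ^ 3 * τp * μ ^ 2 + p ^ 3 * q * t1 ^ 2 * t2 ^ 4 * tp * z1 ^ 3 * z2 ^ 3 * τp * μ ^ 2 + p ^ 4 * t1 ^ 2 * t2 ^ 4 * tp * z1 ^ 2 * z2 ^ 2 * τp * μ ^ 2) * esp +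
      (p ^ 3 * t1 * t2 ^ 5 * tp * z2 * τp * μ ^ 2 + p ^ 3 * t1 ^ 2 * t2 ^ 4 * tp * z1 * z2 ^ 2 * τp * μ ^ 2) * es1 +
      (p ^ 3 * t1 ^ 2 * t2 ^ 4 * tp * z1 * z2 ^ 2 * τp * μ ^ 2 + p ^ 3 * t1 ^ 3 * t2 ^ 3 * tp * z1 ^ 2 * z2 ^ 3 * τp * μ ^ 2) * es2 +
      (p ^ 3 * t1 ^ 4 * t2 ^ 4 * tp ^ 2 * J ^ 2 * z1 * z2 ^ 2 * τp * μ ^ 2 + p ^ 3 * t1 ^ 4 * t2 ^ 4 * tp ^ 2 * J ^ 3 * z1 * z2 ^ 2 * τp * μ ^ 2 + p ^ 3 * t1 ^ 4 * t2 ^ 4 * tp ^ 2 * J ^ 4 * z1 * z2 ^ 2 * τp * μ ^ 2 + p ^ 3 * q * t1 ^ 2 * t2 ^ 6 * tp * z1 * z2 * τp * μ ^ 2 + p ^ 3 * q * t1 ^ 3 * t2 ^ 5 * tp * J ^ 2 * z1 * z2 ^ 3 * τp * μ ^ 2 + p ^ 3 * q * t1 ^ 4 * t2 ^ 4 * tp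 * J * z1 ^ 3 * z2 ^ 3 * τp * μ ^ 2 - p ^ 3 * q ^ 2 * t1 * t2 ^ 7 * J ^ 4 * z1 * z2 ^ 2 * τp * μ ^ 2 - p ^ 3 * q ^ 2 * t1 ^ 2 * t2 ^ 6 * z1 ^ 2 * z2 ^ 3 * τp * μ ^ 2 - p ^ 3 * q ^ 2 * t1 ^ 2 * t2 ^ 6 * z1 ^ 3 * z2 ^ 2 * τp * μ ^ 2 + p ^ 4 * t1 ^ 2 * t2 ^ 6 * tp * τp * μ ^ 2 + p ^ 4 * t1 ^ 3 * t2 ^ 5 * tp * J ^ 2 * z2 ^ 2 * τp * μ ^ 2 + p ^ 4 * t1 ^ 4 * t2 ^ 4 * tp * J * z1 ^ 2 * z2 ^ 2 * τp * μ ^ 2 + p ^ 4 * t1 ^ 4 * t2 ^ 4 * tp * J ^ 2 * z1 * z2 ^ 2 * τp ^ 2 * μ ^ 2 + p ^ 4 * t1 ^ 4 * t2 ^ 4 * tp * J ^ 3 * z1 * z2 ^ 2 * τp ^ 2 * μ ^ 2 + p ^ 4 * t1 ^ 4 * t2 ^ 4 * tp * J ^ 4 * z1 * z2 ^ 2 *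 τp ^ 2 * μ ^ 2 - p ^ 4 * q * t1 * t2 ^ 7 * J * z2 * τp * μ ^ 2 + p ^ 4 * q * t1 ^ 2 * t2 ^ 6 * z1 * z2 * τp ^ 2 * μ ^ 2 + (-2) * p ^ 4 * q * t1 ^ 2 * t2 ^ 6 * z1 * z2 ^ 2 * τp * μ ^ 2 + (-2) * p ^ 4 * q * t1 ^ 2 * t2 ^ 6 * z1 ^ 2 * z2 * τp * μ ^ 2 - p ^ 4 * q * t1 ^ 2 * t2 ^ 6 * J * z1 * z2 ^ 2 * τp * μ ^ 2 - p ^ 4 * q * t1 ^ 2 * t2 ^ 6 * J ^ 2 * z1 * z2 ^ 2 * τp * μ ^ 2 - p ^ 4 * q * t1 ^ 2 * t2 ^ 6 * J ^ 3 * z1 * z2 ^ 2 * τp * μ ^ 2 + p ^ 4 * q * t1 ^ 3 * t2 ^ 5 * J ^ 2 * z1 * z2 ^ 3 * τp ^ 2 * μ ^ 2 - p ^ 4 * q * t1 ^ 3 * t2 ^ 5 * J ^ 2 * z1 ^ 2 * z2 ^ 3 * τp * μ ^ 2 + p ^ 4 * q * t1 ^ 4 * t2 ^ 4 * J * z1 ^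 3 * z2 ^ 3 * τp ^ 2 * μ ^ 2 - p ^ 5 * t1 ^ 2 * t2 ^ 6 * z1 * z2 * μ ^ 2 + p ^ 5 * t1 ^ 2 * t2 ^ 6 * z1 * z2 * θ * μ - p ^ 5 * t1 ^ 2 * t2 ^ 6 * z1 * z2 * τp ^ 2 * θ * μ ^ 2 + 2 * p ^ 5 * t1 ^ 2 * t2 ^ 6 * z1 * z2 ^ 2 * τp * θ * μ ^ 2 + 2 * p ^ 5 * t1 ^ 2 * t2 ^ 6 * z1 ^ 2 * z2 * τp * θ * μ ^ 2 - p ^ 5 * t1 ^ 2 * t2 ^ 6 * z1 ^ 2 * z2 ^ 2 * θ * μ ^ 2 + p ^ 5 * t1 ^ 2 * t2 ^ 6 * z1 ^ 2 * z2 ^ 2 * θ ^ 2 * μ + p ^ 5 * t1 ^ 2 * t2 ^ 6 * z1 ^ 2 * z2 ^ 3 * τp * θ ^ 2 * μ ^ 2 + p ^ 5 * t1 ^ 2 * t2 ^ 6 * z1 ^ 3 * z2 ^ 2 * τp * θ ^ 2 * μ ^ 2 + p ^ 5 * t1 ^ 2 * t2 ^ 6 * J * z2 * τp * θ * μ + p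 ^ 5 * t1 ^ 2 * t2 ^ 6 * J * z1 * z2 ^ 2 * τp * θ ^ 2 * μ - p ^ 5 * t1 ^ 2 * t2 ^ 6 * J * z1 ^ 2 * z2 ^ 2 * τp ^ 2 * μ ^ 4 - p ^ 5 * t1 ^ 2 * t2 ^ 6 * J * z1 ^ 3 * z2 ^ 3 * τp ^ 2 * θ * μ ^ 4 - p ^ 5 * t1 ^ 2 * t2 ^ 6 * J ^ 2 * z2 ^ 2 * τp ^ 2 * μ ^ 3 + p ^ 5 * t1 ^ 2 * t2 ^ 6 * J ^ 2 * z1 * z2 * θ * μ - p ^ 5 * t1 ^ 2 * t2 ^ 6 * J ^ 2 * z1 * z2 * θ ^ 2 + p ^ 5 * t1 ^ 2 * t2 ^ 6 * J ^ 2 * z1 * z2 ^ 2 * τp * μ ^ 3 - p ^ 5 * t1 ^ 2 * t2 ^ 6 * J ^ 2 * z1 * z2 ^ 3 * τp ^ 2 * θ * μ ^ 3 + p ^ 5 * t1 ^ 2 * t2 ^ 6 * J ^ 2 * z1 ^ 2 * z2 ^ 2 * θ ^ 2 * μ - p ^ 5 * t1 ^ 2 * t2 ^ 6 * J ^ 2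 * z1 ^ 2 * z2 ^ 2 * θ ^ 3 + p ^ 5 * t1 ^ 2 * t2 ^ 6 * J ^ 2 * z1 ^ 2 * z2 ^ 3 * τp * θ * μ ^ 3 + p ^ 5 * t1 ^ 3 * t2 ^ 5 * J ^ 2 * z2 ^ 2 * τp ^ 2 * μ ^ 2 - p ^ 5 * t1 ^ 3 * t2 ^ 5 * J ^ 2 * z1 * z2 ^ 2 * τp * μ ^ 2 + p ^ 5 * t1 ^ 4 * t2 ^ 4 * J * z1 ^ 2 * z2 ^ 2 * τp ^ 2 * μ ^ 2 + p ^ 5 * t1 ^ 4 * t2 ^ 4 * J ^ 2 * z1 * z2 ^ 2 * τp ^ 3 * μ ^ 2 + p ^ 5 * t1 ^ 4 * t2 ^ 4 * J ^ 3 * z1 * z2 ^ 2 * τp ^ 3 * μ ^ 2 + p ^ 5 * t1 ^ 4 * t2 ^ 4 * J ^ 4 * z1 * z2 ^ 2 * τp ^ 3 * μ ^ 2) * etp +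
      (p ^ 3 * q ^ 2 * t2 ^ 8 * J ^ 2 * z1 ^ 2 * z2 ^ 2 * τp * μ ^ 2 + p ^ 4 * q * t2 ^ 8 * J ^ 2 * z1 * z2 * τp * μ ^ 2 + p ^ 4 * q * t2 ^ 8 * J ^ 2 * z1 ^ 2 * z2 ^ 2 * τp * θ * μ ^ 2 + p ^ 4 * q * t1 * t2 ^ 7 * J * z1 ^ 2 * z2 ^ 2 * τp * μ ^ 2 - p ^ 4 * q * t1 * t2 ^ 7 * J ^ 4 * z1 * z2 ^ 2 * τp ^ 2 * μ ^ 2 - p ^ 4 * q * t1 ^ 2 * t2 ^ 6 * z1 ^ 2 * z2 ^ 3 * τp ^ 2 * μ ^ 2 - p ^ 4 * q * t1 ^ 2 * t2 ^ 6 * z1 ^ 3 * z2 ^ 2 * τp ^ 2 * μ ^ 2 + p ^ 5 * t2 ^ 8 * J ^ 2 * z1 * z2 * τp * θ * μ ^ 2 + p ^ 5 * t2 ^ 8 * J ^ 2 * z1 ^ 2 * z2 ^ 2 * τp * θ ^ 2 * μ ^ 2 - p ^ 5 * t1 * t2 ^ 7 * J * z2 * τp ^ 2 * μ ^ 2 +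 p ^ 5 * t1 * t2 ^ 7 * J * z1 * z2 * τp * μ ^ 2 + p ^ 5 * t1 * t2 ^ 7 * J * z1 ^ 2 * z2 ^ 2 * τp * θ * μ ^ 2 - p ^ 5 * t1 * t2 ^ 7 * J ^ 4 * z1 * z2 ^ 2 * τp ^ 2 * θ * μ ^ 2 + p ^ 5 * t1 ^ 2 * t2 ^ 6 * z1 * z2 * τp ^ 3 * μ ^ 2 + (-2) * p ^ 5 * t1 ^ 2 * t2 ^ 6 * z1 * z2 ^ 2 * τp ^ 2 * μ ^ 2 + (-2) * p ^ 5 * t1 ^ 2 * t2 ^ 6 * z1 ^ 2 * z2 * τp ^ 2 * μ ^ 2 + p ^ 5 * t1 ^ 2 * t2 ^ 6 * z1 ^ 2 * z2 ^ 2 * τp * μ ^ 2 - p ^ 5 * t1 ^ 2 * t2 ^ 6 * z1 ^ 2 * z2 ^ 3 * τp ^ 2 * θ * μ ^ 2 - p ^ 5 * t1 ^ 2 * t2 ^ 6 * z1 ^ 3 * z2 ^ 2 * τp ^ 2 * θ * μ ^ 2 - p ^ 5 * t1 ^ 2 * t2 ^ 6 * J * z1 * z2 ^ 2 * τp ^ 2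 * μ ^ 2 - p ^ 5 * t1 ^ 2 * t2 ^ 6 * J ^ 2 * z1 * z2 ^ 2 * τp ^ 2 * μ ^ 2 - p ^ 5 * t1 ^ 2 * t2 ^ 6 * J ^ 3 * z1 * z2 ^ 2 * τp ^ 2 * μ ^ 2 + p ^ 5 * t1 ^ 3 * t2 ^ 5 * J ^ 2 * z1 * z2 ^ 3 * τp ^ 3 * μ ^ 2 - p ^ 5 * t1 ^ 3 * t2 ^ 5 * J ^ 2 * z1 ^ 2 * z2 ^ 3 * τp ^ 2 * μ ^ 2 + p ^ 5 * t1 ^ 4 * t2 ^ 4 * J * z1 ^ 3 * z2 ^ 3 * τp ^ 3 * μ ^ 2) * eq2 +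
      (p ^ 6 * t2 ^ 7 * z1 * z2 * τp * θ * μ ^ 2 + p ^ 6 * t2 ^ 7 * z1 ^ 2 * z2 ^ 2 * τp * θ ^ 2 * μ ^ 2 + p ^ 6 * t2 ^ 7 * J * z1 * z2 * τp * θ * μ ^ 2 - p ^ 6 * t2 ^ 7 * J * z1 * z2 ^ 2 * τp ^ 2 * θ * μ ^ 3 + p ^ 6 * t2 ^ 7 * J * z1 * z2 ^ 2 * τp ^ 2 * θ ^ 2 * μ ^ 2 + p ^ 6 * t2 ^ 7 * J * z1 ^ 2 * z2 ^ 2 * τp * θ ^ 2 * μ ^ 2 + p ^ 6 * t2 ^ 7 * J ^ 2 * z1 * z2 * τp * θ * μ ^ 2 - p ^ 6 * t2 ^ 7 * J ^ 2 * z1 * z2 * τp * θ ^ 2 * μ - p ^ 6 * t2 ^ 7 * J ^ 2 * z1 * z2 ^ 2 * τp ^ 2 * θ * μ ^ 3 + p ^ 6 * t2 ^ 7 * J ^ 2 * z1 * z2 ^ 2 * τp ^ 4 * μ ^ 5 + p ^ 6 * t2 ^ 7 * J ^ 2 * z1 ^ 2 * z2 ^ 2 * τp * θ ^ 2 * μ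 ^ 2 - p ^ 6 * t2 ^ 7 * J ^ 2 * z1 ^ 2 * z2 ^ 2 * τp * θ ^ 3 * μ - p ^ 6 * t2 ^ 7 * J ^ 3 * z1 * z2 ^ 2 * τp ^ 2 * θ * μ ^ 3 + p ^ 6 * t2 ^ 7 * J ^ 3 * z1 * z2 ^ 2 * τp ^ 4 * μ ^ 5 - p ^ 6 * t2 ^ 7 * J ^ 4 * z1 * z2 ^ 2 * τp ^ 2 * θ ^ 2 * μ ^ 2 + p ^ 6 * t2 ^ 7 * J ^ 4 * z1 * z2 ^ 2 * τp ^ 4 * μ ^ 5 + p ^ 6 * t1 * t2 ^ 6 * z1 * z2 * τp * θ * μ + p ^ 6 * t1 * t2 ^ 6 * z1 ^ 2 * z2 ^ 2 * τp * θ ^ 2 * μ + p ^ 6 * t1 * t2 ^ 6 * J * z2 * τp ^ 2 * θ * μ - p ^ 6 * t1 * t2 ^ 6 * J * z1 * z2 ^ 2 * τp ^ 2 * θ * μ ^ 2 + p ^ 6 * t1 * t2 ^ 6 * J * z1 * z2 ^ 2 * τp ^ 2 * θ ^ 2 * μ + p ^ 6 * t1 * t2 ^ 6 * J ^ 2 *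 z1 * z2 * τp * θ * μ - p ^ 6 * t1 * t2 ^ 6 * J ^ 2 * z1 * z2 * τp * θ ^ 2 - p ^ 6 * t1 * t2 ^ 6 * J ^ 2 * z1 * z2 ^ 2 * τp ^ 2 * θ * μ ^ 2 + p ^ 6 * t1 * t2 ^ 6 * J ^ 2 * z1 * z2 ^ 2 * τp ^ 4 * μ ^ 4 + p ^ 6 * t1 * t2 ^ 6 * J ^ 2 * z1 ^ 2 * z2 ^ 2 * τp * θ ^ 2 * μ - p ^ 6 * t1 * t2 ^ 6 * J ^ 2 * z1 ^ 2 * z2 ^ 2 * τp * θ ^ 3 - p ^ 6 * t1 * t2 ^ 6 * J ^ 3 * z1 * z2 ^ 2 * τp ^ 2 * θ * μ ^ 2 + p ^ 6 * t1 * t2 ^ 6 * J ^ 3 * z1 * z2 ^ 2 * τp ^ 4 * μ ^ 4 + p ^ 6 * t1 * t2 ^ 6 * J ^ 4 * z1 * z2 ^ 2 * τp ^ 4 * μ ^ 4 + p ^ 6 * t1 ^ 2 * t2 ^ 5 * J * z1 ^ 2 * z2 ^ 2 * τp ^ 3 * μ ^ 3 + p ^ 6 * t1 ^ 2 * t2 ^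 5 * J * z1 ^ 3 * z2 ^ 3 * τp ^ 3 * θ * μ ^ 3 + p ^ 6 * t1 ^ 2 * t2 ^ 5 * J ^ 2 * z2 ^ 2 * τp ^ 3 * μ ^ 2 - p ^ 6 * t1 ^ 2 * t2 ^ 5 * J ^ 2 * z1 * z2 ^ 2 * τp ^ 2 * μ ^ 2 + p ^ 6 * t1 ^ 2 * t2 ^ 5 * J ^ 2 * z1 * z2 ^ 2 * τp ^ 4 * μ ^ 3 + p ^ 6 * t1 ^ 2 * t2 ^ 5 * J ^ 2 * z1 * z2 ^ 3 * τp ^ 3 * θ * μ ^ 2 - p ^ 6 * t1 ^ 2 * t2 ^ 5 * J ^ 2 * z1 ^ 2 * z2 ^ 3 * τp ^ 2 * θ * μ ^ 2 + p ^ 6 * t1 ^ 2 * t2 ^ 5 * J ^ 3 * z1 * z2 ^ 2 * τp ^ 4 * μ ^ 3 + p ^ 6 * t1 ^ 2 * t2 ^ 5 * J ^ 4 * z1 * z2 ^ 2 * τp ^ 4 * μ ^ 3 + p ^ 6 * t1 ^ 3 * t2 ^ 4 * J * z1 ^ 2 * z2 ^ 2 * τp ^ 3 * μ ^ 2 + p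 ^ 6 * t1 ^ 3 * t2 ^ 4 * J * z1 ^ 3 * z2 ^ 3 * τp ^ 3 * θ * μ ^ 2 + p ^ 6 * t1 ^ 3 * t2 ^ 4 * J ^ 2 * z1 * z2 ^ 2 * τp ^ 4 * μ ^ 2 + p ^ 6 * t1 ^ 3 * t2 ^ 4 * J ^ 3 * z1 * z2 ^ 2 * τp ^ 4 * μ ^ 2 + p ^ 6 * t1 ^ 3 * t2 ^ 4 * J ^ 4 * z1 * z2 ^ 2 * τp ^ 4 * μ ^ 2) * et1 +
      (p ^ 6 * t2 ^ 8 * z1 * z2 * τp * θ * μ ^ 3 + p ^ 6 * t2 ^ 8 * z1 ^ 2 * z2 ^ 2 * τp * θ ^ 2 * μ ^ 3 - p ^ 6 * t2 ^ 8 * J * z1 * z2 ^ 2 * τp ^ 2 * θ * μ ^ 4 + p ^ 6 * t2 ^ 8 * J * z1 * z2 ^ 2 * τp ^ 2 * θ ^ 2 * μ ^ 3 - p ^ 6 * t2 ^ 8 * J ^ 2 * z1 * z2 ^ 2 * τp ^ 2 * θ ^ 2 * μ ^ 3 + p ^ 6 * t2 ^ 8 * J ^ 2 * z1 * z2 ^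 2 * τp ^ 4 * μ ^ 6) * hJ
  refine ⟨hmain, ?_⟩
  intro z1 z2 h
  have hA : τp * μ ^ 2 ≠ 0 := mul_ne_zero hτpne (pow_ne_zero 2 hμne)
  have e12 := hmain z1 z2
  have e21 := hmain z2 z1
  have hfac : (1 : ℂ) + θ * z2 * z1 ≠ 0 := by
    intro h0
    apply h
    have h2 : τp * μ ^ 2 * Lam p q t1 t2 s1 s2 tp sp X11 Y z2 z1 = 0 := by
      rw [e21, h0]; ring
    rcases mul_eq_zero.mp h2 with h3 | h3
    · exact absurd h3 hA
    · exact h3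
  have hB21 : LamB J μ τp θ z2 z1 ≠ 0 := by
    intro h0
    apply h
    have h2 : τp * μ ^ 2 * Lam p q t1 t2 s1 s2 tp sp X11 Y z2 z1 = 0 := by
      rw [e21, h0]; ring
    rcases mul_eq_zero.mp h2 with h3 | h3
    · exact absurd h3 hA
    · exact h3
  constructor
  · unfold Sc
    congr 1
    rw [div_eq_div_iff h hB21]
    refine mul_left_cancel₀ (mul_ne_zero hA (mul_ne_zero (pow_ne_zero 2 hp) hfac)) ?_
    linear_combination
      (p ^ 2 * (1 + θ * z2 * z1) * LamB J μ τp θ z2 z1) * e12 -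
      (p ^ 2 * (1 + θ * z1 * z2) * LamB J μ τp θ z1 z2) * e21
  · unfold Nc
    have h2L : (2 : ℂ) * Lam p q t1 t2 s1 s2 tp sp X11 Y z2 z1 ≠ 0 :=
      mul_ne_zero two_ne_zero h
    have h2B : (2 : ℂ) * LamB J μ τp θ z2 z1 ≠ 0 := mul_ne_zero two_ne_zero hB21
    rw [div_eq_div_iff h2L h2B]
    refine mul_left_cancel₀ (mul_ne_zero (mul_ne_zero hτpne (pow_ne_zero 2 hμne)) hp) ?_
    linear_combination
      (-(2 * p * τ2 * τp * μ ^ 2 * (z1 - z2) * (1 + μ * z1 * z2))) * e21 +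
      (2 * τp * μ ^ 2 * p * (z1 - z2) * LamB J μ τp θ z2 z1 * p * (1 + θ * z1 * z2) * z1 * z2) * et1 +
      (2 * τp * μ ^ 2 * p * (z1 - z2) * LamB J μ τp θ z2 z1 * z1 * z2 * (t2 + t1 * z1 * z2)) * eq2 -
      (2 * τp * μ ^ 2 * p * (z1 - z2) * LamB J μ τp θ z2 z1 * p * (1 + μ * z1 * z2) * (1 + θ * z1 * z2)) * eτ2
end
end

section
/- For the SpR parameter family, the amplitude Λ factorizes: for all complex z1, z2, τ2·τp·Λ(z1,z2) = (p + q·z1z2)·(t2 + t1·z1z2)·( (τ3²−τ3+1)·z1z2 − τp·(z1+z2−τ3·z2) + τp² ). Consequently, wherever the denominators are nonzero, S(z1,z2) = −( (τ3²−τ3+1)·z1z2 − τp·(z1+z2−τ3·z2) + τp² )/( (τ3²−τ3+1)·z1z2 − τp·(z1+z2−τ3·z1) + τp² ) and N(z1,z2) = τ2·τp·(z1−z2)/( 2·( (τ3²−τ3+1)·z1z2 − τp·(z1+z2−τ3·z1) + τp² ) ). -/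
noncomputable section

/-- Factorization of `Λ` and the resulting `S` and `N` for the SpR model. -/
theorem statement12 (p q tp t2 t3 : ℂ)
    (hp : p ≠ 0) (hq : q ≠ 0) (htp : tp ≠ 0) (ht2 : t2 ≠ 0) (ht3 : t3 ≠ 0)
    (t1 s1 s2 sp X11 Y τp τ2 τ3 : ℂ)
    (ht1 : t1 = q * t2 / p) (hs1 : s1 = p * t3 / t2) (hs2 : s2 = q * t3 / t2)
    (hsp : sp = q * (t3 ^ 2 - t3 * p + p ^ 2) / (p * tp))
    (hX11 : X11 = 0) (hY : Y = (t3 ^ 2 - t3 * p + p ^ 2) / tp + q * tp / p)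
    (hτp : τp = tp / p) (hτ2 : τ2 = t2 / p) (hτ3 : τ3 = t3 / p) :
    (∀ z1 z2 : ℂ,
      τ2 * τp * Lam p q t1 t2 s1 s2 tp sp X11 Y z1 z2 =
        (p + q * z1 * z2) * (t2 + t1 * z1 * z2) *
          ((τ3 ^ 2 - τ3 + 1) * z1 * z2 - τp * (z1 + z2 - τ3 * z2) + τp ^ 2)) ∧
    ∀ z1 z2 : ℂ, Lam p q t1 t2 s1 s2 tp sp X11 Y z2 z1 ≠ 0 →
      Sc p q t1 t2 s1 s2 tp sp X11 Y z1 z2 =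
          -(((τ3 ^ 2 - τ3 + 1) * z1 * z2 - τp * (z1 + z2 - τ3 * z2) + τp ^ 2) /
            ((τ3 ^ 2 - τ3 + 1) * z1 * z2 - τp * (z1 + z2 - τ3 * z1) + τp ^ 2)) ∧
      Nc p q t1 t2 s1 s2 tp sp X11 Y z1 z2 =
          τ2 * τp * (z1 - z2) /
            (2 * ((τ3 ^ 2 - τ3 + 1) * z1 * z2 - τp * (z1 + z2 - τ3 * z1) + τp ^ 2)) := by

  have hτ2ne : τ2 ≠ 0 := by rw [hτ2]; exact div_ne_zero ht2 hp
  have hτpne : τp ≠ 0 := by rw [hτp]; exact div_ne_zero htp hp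
  have hττ : τ2 * τp ≠ 0 := mul_ne_zero hτ2ne hτpne
  have hfac : ∀ z1 z2 : ℂ,
      τ2 * τp * Lam p q t1 t2 s1 s2 tp sp X11 Y z1 z2 =
        (p + q * z1 * z2) * (t2 + t1 * z1 * z2) *
          ((τ3 ^ 2 - τ3 + 1) * z1 * z2 - τp * (z1 + z2 - τ3 * z2) + τp ^ 2) := by
    intro z1 z2
    have e1 : τ2 * (s1 + s2 * z1 * z2) = τ3 * (p + q * z1 * z2) := by
      rw [hs1, hs2, hτ2, hτ3]; field_simp
    have e2 : τp * (Y * z1 * z2 - q * z1 * z2 * (z1 + z2) - p * (z1 + z2) +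
        sp * z1 ^ 2 * z2 ^ 2 + tp) =
        (p + q * z1 * z2) *
          ((τ3 ^ 2 - τ3 + 1) * (z1 * z2) + τp ^ 2 - τp * (z1 + z2)) := by
      have f1 : τp * Y = p * (τ3 ^ 2 - τ3 + 1) + q * τp ^ 2 := by
        rw [hY, hτp, hτ3]; field_simp
      have f2 : τp * sp = q * (τ3 ^ 2 - τ3 + 1) := by
        rw [hsp, hτp, hτ3]; field_simp
      have f3 : tp = τp * p := by
        rw [hτp]; field_simp
      linear_combination (z1 * z2) * f1 + (z1 ^ 2 * z2 ^ 2) * f2 + τp * f3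
    have e3 : τ2 * (p + q * z1 * z2) = t2 + t1 * z1 * z2 := by
      rw [ht1, hτ2]; field_simp
    simp only [Lam, hX11, zero_mul]
    linear_combination (τp * z2 * (t2 + t1 * z1 * z2)) * e1 +
      ((p + q * z1 * z2) * τ2) * e2 +
      ((p + q * z1 * z2) *
        ((τ3 ^ 2 - τ3 + 1) * (z1 * z2) + τp ^ 2 - τp * (z1 + z2))) * e3
  refine ⟨hfac, ?_⟩
  intro z1 z2 hne
  set L12 := Lam p q t1 t2 s1 s2 tp sp X11 Y z1 z2 with hL12
  set L21 := Lam p q t1 t2 s1 s2 tp sp X11 Y z2 z1 with hL21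
  set A := (p + q * z1 * z2) * (t2 + t1 * z1 * z2) with hA
  set D2 := (τ3 ^ 2 - τ3 + 1) * z1 * z2 - τp * (z1 + z2 - τ3 * z2) + τp ^ 2 with hD2
  set D1 := (τ3 ^ 2 - τ3 + 1) * z1 * z2 - τp * (z1 + z2 - τ3 * z1) + τp ^ 2 with hD1
  have h12 : τ2 * τp * L12 = A * D2 := hfac z1 z2
  have h21 : τ2 * τp * L21 = A * D1 := by
    rw [hfac z2 z1, hA, hD1]; ring
  have hAD : A * D1 ≠ 0 := by rw [← h21]; exact mul_ne_zero hττ hne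
  have hAne : A ≠ 0 := left_ne_zero_of_mul hAD
  have hD1ne : D1 ≠ 0 := right_ne_zero_of_mul hAD
  constructor
  · have key : L12 / L21 = D2 / D1 := by
      rw [div_eq_div_iff hne hD1ne]
      apply mul_left_cancel₀ hττ
      calc τ2 * τp * (L12 * D1) = (τ2 * τp * L12) * D1 := by ring
        _ = (A * D2) * D1 := by rw [h12]
        _ = D2 * (A * D1) := by ring
        _ = D2 * (τ2 * τp * L21) := by rw [h21]
        _ = τ2 * τp * (D2 * L21) := by ring
    rw [Sc, ← hL12, ← hL21, key]
  · rw [Nc, ← hL21]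
    rw [div_eq_div_iff (mul_ne_zero two_ne_zero hne) (mul_ne_zero two_ne_zero hD1ne)]
    apply mul_left_cancel₀ hττ
    calc τ2 * τp * ((z1 - z2) * (p + q * z1 * z2) * (t2 + t1 * z1 * z2) * (2 * D1))
        = (z1 - z2) * 2 * D1 * (τ2 * τp) * A := by rw [hA]; ring
      _ = (z1 - z2) * 2 * (A * D1) * (τ2 * τp) := by ring
      _ = (z1 - z2) * 2 * (τ2 * τp * L21) * (τ2 * τp) := by rw [h21]
      _ = τ2 * τp * (τ2 * τp * (z1 - z2) * (2 * L21)) := by ring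
end
end

section
/- For the SB5 parameter family (generalization of the special branch genus 5 model), the amplitude Λ factorizes: for all complex z1, z2, Λ(z1,z2) = −p·(p + q·z1z2)·( θ·z1z2·(z1 − J²·z2) − Υ·z1z2 + z1 − J·z2 ). Consequently, wherever the denominators are nonzero, S(z1,z2) = −( θ·z1z2·(z1−J²·z2) − Υ·z1z2 + z1 − J·z2 )/( θ·z1z2·(z2−J²·z1) − Υ·z1z2 + z2 − J·z1 ) and N(z1,z2) = −τ2·(z1−z2)·(θ·z1z2+1)/( 2·( θ·z1z2·(z2−J²·z1) − Υ·z1z2 + z2 − J·z1 ) ). -/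
noncomputable section

/-- Factorization of `Λ` and the resulting `S` and `N` for the generalization
of the special branch genus 5 model (SB5). -/
theorem statement13 (p q t2 Y J : ℂ)
    (hp : p ≠ 0) (hq : q ≠ 0) (ht2 : t2 ≠ 0) (hJ : J ^ 2 + J + 1 = 0)
    (tp sp t1 s1 s2 X11 θ Υ τ2 : ℂ)
    (htp : tp = 0) (hsp : sp = 0) (ht1 : t1 = q * t2 / p)
    (hs1 : s1 = -J ^ 2 * p ^ 2 / t2) (hs2 : s2 = -J * p * q / t2) (hX11 : X11 = 0)
    (hθ : θ = q / p) (hΥ : Υ = Y / p) (hτ2 : τ2 = t2 / p) :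
    (∀ z1 z2 : ℂ,
      Lam p q t1 t2 s1 s2 tp sp X11 Y z1 z2 =
        -p * (p + q * z1 * z2) *
          (θ * z1 * z2 * (z1 - J ^ 2 * z2) - Υ * z1 * z2 + z1 - J * z2)) ∧
    ∀ z1 z2 : ℂ, Lam p q t1 t2 s1 s2 tp sp X11 Y z2 z1 ≠ 0 →
      Sc p q t1 t2 s1 s2 tp sp X11 Y z1 z2 =
          -((θ * z1 * z2 * (z1 - J ^ 2 * z2) - Υ * z1 * z2 + z1 - J * z2) /
            (θ * z1 * z2 * (z2 - J ^ 2 * z1) - Υ * z1 * z2 + z2 - J * z1)) ∧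
      Nc p q t1 t2 s1 s2 tp sp X11 Y z1 z2 =
          -(τ2 * (z1 - z2) * (θ * z1 * z2 + 1) /
            (2 * (θ * z1 * z2 * (z2 - J ^ 2 * z1) - Υ * z1 * z2 + z2 - J * z1))) := by
  have hfac : ∀ z1 z2 : ℂ,
      Lam p q t1 t2 s1 s2 tp sp X11 Y z1 z2 =
        -p * (p + q * z1 * z2) *
          (θ * z1 * z2 * (z1 - J ^ 2 * z2) - Υ * z1 * z2 + z1 - J * z2) := by
    intro z1 z2
    subst htp hsp ht1 hs1 hs2 hX11 hθ hΥ
    unfold Lam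
    field_simp
    ring_nf
    linear_combination (p^2*z2^2*t2 + p*q*z1*z2^3*t2 + p*q*z1^2*z2^2*t2 + q^2*z1^3*z2^3*t2
      - p^2*t2^2*z2*(p + q*z1*z2)^2 - (z2^2*p*t2*q*z1^2 + z2^2*p^2*t2 + z2^3*p*t2*q*z1 + z2^3*t2*q^2*z1^3)
      + z2*(p + q*z1*z2)^2*(p^2*t2^2 - 1)) * hJ
  refine ⟨hfac, fun z1 z2 hne => ?_⟩
  have key : Lam p q t1 t2 s1 s2 tp sp X11 Y z2 z1 =
      -p * (p + q * z2 * z1) *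
        (θ * z2 * z1 * (z2 - J ^ 2 * z1) - Υ * z2 * z1 + z2 - J * z1) := hfac z2 z1
  have hB : -p * (p + q * z2 * z1) *
      (θ * z2 * z1 * (z2 - J ^ 2 * z1) - Υ * z2 * z1 + z2 - J * z1) ≠ 0 := key ▸ hne
  have h2 : (θ * z1 * z2 * (z2 - J ^ 2 * z1) - Υ * z1 * z2 + z2 - J * z1) ≠ 0 := by
    intro h; apply hB
    have : θ * z2 * z1 * (z2 - J ^ 2 * z1) - Υ * z2 * z1 + z2 - J * z1 = 0 := by
      linear_combination h
    rw [this]; ring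
  constructor
  · rw [Sc, hfac, key, ← neg_div, ← neg_div, div_eq_div_iff hB h2]
    ring
  · rw [Nc, key, ← neg_div, div_eq_div_iff (by
        intro h
        rcases mul_eq_zero.mp h with h | h
        · exact two_ne_zero h
        · exact hB h)
      (by
        intro h
        rcases mul_eq_zero.mp h with h | h
        · exact two_ne_zero h
        · exact h2 h)]
    subst hτ2 hθ ht1
    field_simp
    ring
end
end

section
/- For the 17V1 parameter family, the amplitude Λ factorizes: for all complex z1, z2, τ2·τp·Λ(z1,z2) = (p + q·z1z2)·(t2 + t1·z1z2)·(z1 − τp)·(z2 − τp). In particular Λ(z1,z2) = Λ(z2,z1), so wherever Λ ≠ 0 the scattering amplitude is trivial, S(z1,z2) = −1, and the decay coefficient is N(z1,z2) = τ2·τp·(z1−z2)/( 2·(z1−τp)·(z2−τp) ). -/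
noncomputable section

/-- Factorization of `Λ` for the 17V1 model: `Λ` is symmetric, the scattering
amplitude is trivial and the decay coefficient factorizes. -/
theorem statement14 (p q tp t2 : ℂ)
    (hp : p ≠ 0) (hq : q ≠ 0) (htp : tp ≠ 0) (ht2 : t2 ≠ 0)
    (t1 s1 s2 sp X11 Y τp τ2 : ℂ)
    (hs1 : s1 = 0) (hs2 : s2 = 0) (hsp : sp = p * q / tp) (ht1 : t1 = q * t2 / p)
    (hX11 : X11 = 0) (hY : Y = p ^ 2 / tp + q * tp / p)
    (hτp : τp = tp / p) (hτ2 : τ2 = t2 / p) :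
    (∀ z1 z2 : ℂ,
      τ2 * τp * Lam p q t1 t2 s1 s2 tp sp X11 Y z1 z2 =
        (p + q * z1 * z2) * (t2 + t1 * z1 * z2) * (z1 - τp) * (z2 - τp)) ∧
    (∀ z1 z2 : ℂ,
      Lam p q t1 t2 s1 s2 tp sp X11 Y z1 z2 = Lam p q t1 t2 s1 s2 tp sp X11 Y z2 z1) ∧
    ∀ z1 z2 : ℂ, Lam p q t1 t2 s1 s2 tp sp X11 Y z2 z1 ≠ 0 →
      Sc p q t1 t2 s1 s2 tp sp X11 Y z1 z2 = -1 ∧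
      Nc p q t1 t2 s1 s2 tp sp X11 Y z1 z2 =
          τ2 * τp * (z1 - z2) / (2 * (z1 - τp) * (z2 - τp)) := by

  subst hs1 hs2 hsp ht1 hX11 hY hτp hτ2
  have hfac : ∀ z1 z2 : ℂ,
      (t2 / p) * (tp / p) * Lam p q (q * t2 / p) t2 0 0 tp (p * q / tp) 0
        (p ^ 2 / tp + q * tp / p) z1 z2 =
      (p + q * z1 * z2) * (t2 + (q * t2 / p) * z1 * z2) * (z1 - tp / p) * (z2 - tp / p) := by
    intro z1 z2
    simp only [Lam]
    field_simp
    ring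
  have hττ : (t2 / p) * (tp / p) ≠ 0 := by
    apply mul_ne_zero <;> exact div_ne_zero (by assumption) hp
  have hsym : ∀ z1 z2 : ℂ,
      Lam p q (q * t2 / p) t2 0 0 tp (p * q / tp) 0 (p ^ 2 / tp + q * tp / p) z1 z2 =
      Lam p q (q * t2 / p) t2 0 0 tp (p * q / tp) 0 (p ^ 2 / tp + q * tp / p) z2 z1 := by
    intro z1 z2
    refine mul_left_cancel₀ hττ ?_
    rw [hfac, hfac]; ring
  refine ⟨hfac, hsym, fun z1 z2 hL => ?_⟩
  constructor
  · rw [Sc, hsym z1 z2, div_self hL]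
  · rw [Nc]
    have h1 : (p + q * z1 * z2) ≠ 0 := by
      intro h
      apply hL
      have := hfac z2 z1
      have h2 : (p + q * z2 * z1) = 0 := by rw [← h]; ring
      rw [h2] at this
      simp at this
      exact mul_left_cancel₀ hττ (by simpa using this)
    have h2 : (t2 + (q * t2 / p) * z1 * z2) ≠ 0 := by
      intro h
      apply hL
      have := hfac z2 z1
      have h2 : (t2 + (q * t2 / p) * z2 * z1) = 0 := by rw [← h]; ring
      rw [h2] at this
      simp at this
      exact mul_left_cancel₀ hττ (by simpa using this)
    have h3 : (z1 - tp / p) ≠ 0 := by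
      intro h
      apply hL
      have := hfac z2 z1
      rw [h] at this
      simp at this
      exact mul_left_cancel₀ hττ (by simpa using this)
    have h4 : (z2 - tp / p) ≠ 0 := by
      intro h
      apply hL
      have := hfac z2 z1
      rw [h] at this
      simp at this
      exact mul_left_cancel₀ hττ (by simpa using this)
    rw [div_eq_div_iff (by simpa using hL) (by
      simp only [mul_ne_zero_iff]
      exact ⟨⟨two_ne_zero, h3⟩, h4⟩)]
    linear_combination (-2 * (z1 - z2)) * hfac z2 z1
end
end

section
/- For the 17V2 parameter family, the amplitude Λ factorizes: for all complex z1, z2, τp²·Λ(z1,z2) = p·(p + q·z1z2)·(z1 − τp)·(z2 − τp)·( θ·τp·z1z2 − (θ·τp² + 1)·z2 + τp ). Consequently, wherever the denominators are nonzero, S(z1,z2) = −( θ·τp·z1z2 − (θ·τp²+1)·z2 + τp )/( θ·τp·z1z2 − (θ·τp²+1)·z1 + τp ) and N(z1,z2) = −τ2·(z1−z2)·(z1z2 − τp²)/( 2·( θ·τp·z1z2 − (θ·τp²+1)·z1 + τp )·(z1−τp)·(z2−τp) ). -/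
noncomputable section

set_option maxHeartbeats 1000000 in
/-- Factorization of `Λ` and the resulting `S` and `N` for the 17V2 model. -/
theorem statement15 (p q tp t2 : ℂ)
    (hp : p ≠ 0) (hq : q ≠ 0) (htp : tp ≠ 0) (ht2 : t2 ≠ 0)
    (t1 s1 s2 sp X11 Y τp τ2 θ : ℂ)
    (hs1 : s1 = 0) (hs2 : s2 = 0) (hsp : sp = p * q / tp)
    (ht1 : t1 = -(p ^ 2 * t2) / tp ^ 2)
    (hX11 : X11 = p ^ 2 / tp + q * tp / p) (hY : Y = p ^ 2 / tp + q * tp / p)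
    (hτp : τp = tp / p) (hτ2 : τ2 = t2 / p) (hθ : θ = q / p) :
    (∀ z1 z2 : ℂ,
      τp ^ 2 * Lam p q t1 t2 s1 s2 tp sp X11 Y z1 z2 =
        p * (p + q * z1 * z2) * (z1 - τp) * (z2 - τp) *
          (θ * τp * z1 * z2 - (θ * τp ^ 2 + 1) * z2 + τp)) ∧
    ∀ z1 z2 : ℂ, Lam p q t1 t2 s1 s2 tp sp X11 Y z2 z1 ≠ 0 →
      Sc p q t1 t2 s1 s2 tp sp X11 Y z1 z2 =
          -((θ * τp * z1 * z2 - (θ * τp ^ 2 + 1) * z2 + τp) /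
            (θ * τp * z1 * z2 - (θ * τp ^ 2 + 1) * z1 + τp)) ∧
      Nc p q t1 t2 s1 s2 tp sp X11 Y z1 z2 =
          -(τ2 * (z1 - z2) * (z1 * z2 - τp ^ 2) /
            (2 * (θ * τp * z1 * z2 - (θ * τp ^ 2 + 1) * z1 + τp) *
              (z1 - τp) * (z2 - τp))) := by
  subst hs1 hs2 hsp ht1 hX11 hY hτp hτ2 hθ
  have hP : p * p⁻¹ = 1 := mul_inv_cancel₀ hp
  have hT : tp * tp⁻¹ = 1 := mul_inv_cancel₀ htp
  have key : ∀ z1 z2 : ℂ,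
      (tp / p) ^ 2 * Lam p q (-(p ^ 2 * t2) / tp ^ 2) t2 0 0 tp (p * q / tp)
        (p ^ 2 / tp + q * tp / p) (p ^ 2 / tp + q * tp / p) z1 z2 =
      p * (p + q * z1 * z2) * (z1 - tp / p) * (z2 - tp / p) *
        (q / p * (tp / p) * z1 * z2 - (q / p * (tp / p) ^ 2 + 1) * z2 + tp / p) := by
    intro z1 z2
    simp only [Lam]
    linear_combination (tp^2*z2 - tp^3*z2*tp⁻¹ - q*tp*z1*z2^3 + (-3:ℂ)*q*tp*z1^2*z2^2 + (2:ℂ)*q*tp^2*z1*z2^2*p⁻¹ + q*tp^2*z1*z2^3*tp⁻¹ + (3:ℂ)*q*tp^2*z1^2*z2^2*tp⁻¹ - q*tp^3*z1*z2*p⁻¹^2 + (-2:ℂ)*q*tp^3*z1*z2^2*p⁻¹*tp⁻¹ + q*tp^4*z2*p⁻¹^3 - q^2*tp*z1^3*z2^3*p⁻¹ + (2:ℂ)*q^2*tp^2*z1^2*z2^3*p⁻¹^2 + q^2*tp^2*z1^3*z2^2*p⁻¹^2 + q^2*tp^2*z1^3*z2^3*p⁻¹*tp⁻¹ - q^2*tp^3*z1*z2^3*p⁻¹^3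 + (-2:ℂ)*q^2*tp^3*z1^2*z2^2*p⁻¹^3 - q^2*tp^3*z1^2*z2^3*p⁻¹^2*tp⁻¹ + q^2*tp^4*z1*z2^2*p⁻¹^4 - p*tp*z2^2 + (-2:ℂ)*p*tp*z1*z2 + p*tp^2*z2*p⁻¹ + p*tp^2*z2^2*tp⁻¹ + (2:ℂ)*p*tp^2*z1*z2*tp⁻¹ - p*tp^3*p⁻¹^2 - p*tp^3*z2*p⁻¹*tp⁻¹ - p*q*tp*z1^2*z2^2*p⁻¹ + (2:ℂ)*p*q*tp^2*z1*z2^2*p⁻¹^2 + p*q*tp^2*z1*z2^3*p⁻¹*tp⁻¹ + p*q*tp^2*z1^2*z2*p⁻¹^2 + (3:ℂ)*p*q*tp^2*z1^2*z2^2*p⁻¹*tp⁻¹ - p*q*tp^2*z1^2*z2^3*tp⁻¹^2 - p*q*tp^3*z2^2*p⁻¹^3 + (-2:ℂ)*p*q*tp^3*z1*z2*p⁻¹^3 + (-2:ℂ)*p*q*tp^3*z1*z2^2*p⁻¹^2*tp⁻¹ + p*q*tp^4*z2*p⁻¹^4 + p^2*tp^2*z2^2*p⁻¹*tp⁻¹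 + (2:ℂ)*p^2*tp^2*z1*z2*p⁻¹*tp⁻¹ - p^2*tp^2*z1*z2^2*tp⁻¹^2 - p^2*q*tp^2*z1^2*z2^3*p⁻¹*tp⁻¹^2 - p^3*tp^2*z1*z2^2*p⁻¹*tp⁻¹^2) * hP + (-tp^2*z2 + q*tp*z1*z2^3 + (3:ℂ)*q*tp*z1^2*z2^2 + (-2:ℂ)*q*tp^2*z1*z2^2*p⁻¹ + q^2*tp*z1^3*z2^3*p⁻¹ - q^2*tp^2*z1^2*z2^3*p⁻¹^2 + p*tp*z2^2 + (2:ℂ)*p*tp*z1*z2 - p*q*z1^2*z2^3 - p*q*tp*z1^2*z2^3*tp⁻¹ - p^2*z1*z2^2 - p^2*tp*z1*z2^2*tp⁻¹) * hT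
  have key' : ∀ z1 z2 : ℂ,
      Lam p q (-(p ^ 2 * t2) / tp ^ 2) t2 0 0 tp (p * q / tp)
        (p ^ 2 / tp + q * tp / p) (p ^ 2 / tp + q * tp / p) z1 z2 =
      p ^ 2 * tp⁻¹ ^ 2 * (p * (p + q * z1 * z2) * (z1 - tp / p) * (z2 - tp / p) *
        (q / p * (tp / p) * z1 * z2 - (q / p * (tp / p) ^ 2 + 1) * z2 + tp / p)) := by
    intro z1 z2
    simp only [Lam]
    linear_combination (q*tp*z2^2 + (2:ℂ)*q*tp*z1*z2 - q*tp^3*z2^2*tp⁻¹^2 + (-3:ℂ)*q*tp^3*z1*z2*tp⁻¹^2 + q*tp^4*z2*p⁻¹*tp⁻¹^2 - q^2*tp*z1^2*z2^3*tp⁻¹ + (2:ℂ)*q^2*tp^2*z1^2*z2^3*tp⁻¹^2 + q^2*tp^2*z1^3*z2^2*tp⁻¹^2 - q^2*tp^3*z1*z2^3*p⁻¹*tp⁻¹^2 + (-2:ℂ)*q^2*tp^3*z1^2*z2^2*p⁻¹*tp⁻¹^2 + q^2*tp^4*z1*z2^2*p⁻¹^2*tp⁻¹^2 - p*tp^3*tp⁻¹^2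 + (-2:ℂ)*p*q*tp*z1*z2^2*tp⁻¹ + (4:ℂ)*p*q*tp^2*z1*z2^2*tp⁻¹^2 + (2:ℂ)*p*q*tp^2*z1^2*z2*tp⁻¹^2 - p*q*tp^3*z2^2*p⁻¹*tp⁻¹^2 + (-3:ℂ)*p*q*tp^3*z1*z2*p⁻¹*tp⁻¹^2 + p*q*tp^4*z2*p⁻¹^2*tp⁻¹^2 - p*q^2*tp*z1^3*z2^3*tp⁻¹^2 + (2:ℂ)*p*q^2*tp^2*z1^2*z2^3*p⁻¹*tp⁻¹^2 + p*q^2*tp^2*z1^3*z2^2*p⁻¹*tp⁻¹^2 - p*q^2*tp^3*z1*z2^3*p⁻¹^2*tp⁻¹^2 + (-2:ℂ)*p*q^2*tp^3*z1^2*z2^2*p⁻¹^2*tp⁻¹^2 + p*q^2*tp^4*z1*z2^2*p⁻¹^3*tp⁻¹^2 + (2:ℂ)*p^2*tp^2*z2*tp⁻¹^2 + p^2*tp^2*z1*tp⁻¹^2 - p^2*tp^3*p⁻¹*tp⁻¹^2 - p^2*q*tp*z1*z2^3*tp⁻¹^2 + (-3:ℂ)*p^2*q*tp*z1^2*z2^2*tp⁻¹^2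 + (4:ℂ)*p^2*q*tp^2*z1*z2^2*p⁻¹*tp⁻¹^2 + (2:ℂ)*p^2*q*tp^2*z1^2*z2*p⁻¹*tp⁻¹^2 - p^2*q*tp^3*z2^2*p⁻¹^2*tp⁻¹^2 + (-3:ℂ)*p^2*q*tp^3*z1*z2*p⁻¹^2*tp⁻¹^2 + p^2*q*tp^4*z2*p⁻¹^3*tp⁻¹^2 - p^2*q^2*tp*z1^3*z2^3*p⁻¹*tp⁻¹^2 + (2:ℂ)*p^2*q^2*tp^2*z1^2*z2^3*p⁻¹^2*tp⁻¹^2 + p^2*q^2*tp^2*z1^3*z2^2*p⁻¹^2*tp⁻¹^2 - p^2*q^2*tp^3*z1*z2^3*p⁻¹^3*tp⁻¹^2 + (-2:ℂ)*p^2*q^2*tp^3*z1^2*z2^2*p⁻¹^3*tp⁻¹^2 + p^2*q^2*tp^4*z1*z2^2*p⁻¹^4*tp⁻¹^2 - p^3*tp*z2^2*tp⁻¹^2 + (-2:ℂ)*p^3*tp*z1*z2*tp⁻¹^2 + (2:ℂ)*p^3*tp^2*z2*p⁻¹*tp⁻¹^2 + p^3*tp^2*z1*p⁻¹*tp⁻¹^2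 - p^3*tp^3*p⁻¹^2*tp⁻¹^2 - p^3*q*tp*z1^2*z2^2*p⁻¹*tp⁻¹^2 + (2:ℂ)*p^3*q*tp^2*z1*z2^2*p⁻¹^2*tp⁻¹^2 + p^3*q*tp^2*z1^2*z2*p⁻¹^2*tp⁻¹^2 - p^3*q*tp^3*z2^2*p⁻¹^3*tp⁻¹^2 + (-2:ℂ)*p^3*q*tp^3*z1*z2*p⁻¹^3*tp⁻¹^2 + p^3*q*tp^4*z2*p⁻¹^4*tp⁻¹^2) * hP + (-q*tp*z2^2 + (-3:ℂ)*q*tp*z1*z2 + q*tp^2*z2*p⁻¹ - q*tp^2*z2^2*tp⁻¹ + (-3:ℂ)*q*tp^2*z1*z2*tp⁻¹ + q*tp^3*z2*p⁻¹*tp⁻¹ + q^2*z1^2*z2^3 + q^2*z1^3*z2^2 - q^2*tp*z1*z2^3*p⁻¹ + (-2:ℂ)*q^2*tp*z1^2*z2^2*p⁻¹ + (2:ℂ)*q^2*tp*z1^2*z2^3*tp⁻¹ + q^2*tp*z1^3*z2^2*tp⁻¹ + q^2*tp^2*z1*z2^2*p⁻¹^2 - q^2*tp^2*z1*z2^3*p⁻¹*tp⁻¹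 + (-2:ℂ)*q^2*tp^2*z1^2*z2^2*p⁻¹*tp⁻¹ + q^2*tp^3*z1*z2^2*p⁻¹^2*tp⁻¹ - p*tp - p*tp^2*tp⁻¹ + (2:ℂ)*p*q*z1*z2^2 + (2:ℂ)*p*q*z1^2*z2 + (4:ℂ)*p*q*tp*z1*z2^2*tp⁻¹ + (2:ℂ)*p*q*tp*z1^2*z2*tp⁻¹ - p*q^2*z1^3*z2^3*tp⁻¹ + p^2*z2 + p^2*z1 + (2:ℂ)*p^2*tp*z2*tp⁻¹ + p^2*tp*z1*tp⁻¹ - p^2*q*z1*z2^3*tp⁻¹ + (-3:ℂ)*p^2*q*z1^2*z2^2*tp⁻¹ - p^3*z2^2*tp⁻¹ + (-2:ℂ)*p^3*z1*z2*tp⁻¹) * hT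
  refine ⟨key, fun z1 z2 hne => ?_⟩
  have hA21 : p * (p + q * z2 * z1) * (z2 - tp / p) * (z1 - tp / p) *
      (q / p * (tp / p) * z2 * z1 - (q / p * (tp / p) ^ 2 + 1) * z1 + tp / p) ≠ 0 := by
    intro h
    apply hne
    rw [key' z2 z1, h, mul_zero]
  have hDden : q / p * (tp / p) * z1 * z2 - (q / p * (tp / p) ^ 2 + 1) * z1 + tp / p ≠ 0 :=
    fun h => hA21 (by linear_combination (p * (p + q * z2 * z1) * (z2 - tp / p) * (z1 - tp / p)) * h)
  have h3 : z1 - tp / p ≠ 0 :=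
    fun h => hA21 (by linear_combination (p * (p + q * z2 * z1) * (z2 - tp / p) * (q / p * (tp / p) * z2 * z1 - (q / p * (tp / p) ^ 2 + 1) * z1 + tp / p)) * h)
  have h2 : z2 - tp / p ≠ 0 :=
    fun h => hA21 (by linear_combination (p * (p + q * z2 * z1) * (z1 - tp / p) * (q / p * (tp / p) * z2 * z1 - (q / p * (tp / p) ^ 2 + 1) * z1 + tp / p)) * h)
  have hden1 : p ^ 2 * tp⁻¹ ^ 2 * (p * (p + q * z2 * z1) * (z2 - tp / p) * (z1 - tp / p) *
      (q / p * (tp / p) * z2 * z1 - (q / p * (tp / p) ^ 2 + 1) * z1 + tp / p)) ≠ 0 := by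
    rw [← key' z2 z1]; exact hne
  constructor
  · rw [Sc, key' z1 z2, key' z2 z1, neg_inj, div_eq_div_iff hden1 hDden]
    ring
  · rw [Nc, key' z2 z1, ← neg_div, div_eq_div_iff (mul_ne_zero two_ne_zero hden1)
      (mul_ne_zero (mul_ne_zero (mul_ne_zero two_ne_zero hDden) h3) h2)]
    linear_combination ((-4:ℂ)*tp*t2*z1*z2^2 + (2:ℂ)*tp*t2*z1^2*z2 + (2:ℂ)*tp*t2*z1^3 + (2:ℂ)*tp^2*t2*z2^2*p⁻¹ + (2:ℂ)*tp^2*t2*z1*z2*p⁻¹ + (-4:ℂ)*tp^2*t2*z1^2*p⁻¹ + (-2:ℂ)*tp^3*t2*z2*p⁻¹^2 + (2:ℂ)*tp^3*t2*z1*p⁻¹^2 + (4:ℂ)*tp^3*t2*z1*z2^2*tp⁻¹^2 + (-2:ℂ)*tp^3*t2*z1^2*z2*tp⁻¹^2 + (-2:ℂ)*tp^3*t2*z1^3*tp⁻¹^2 + (-2:ℂ)*tp^4*t2*z2^2*p⁻¹*tp⁻¹^2 + (-2:ℂ)*tp^4*t2*z1*z2*p⁻¹*tp⁻¹^2 + (4:ℂ)*tp^4*t2*z1^2*p⁻¹*tp⁻¹^2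 + (2:ℂ)*tp^5*t2*z2*p⁻¹^2*tp⁻¹^2 + (-2:ℂ)*tp^5*t2*z1*p⁻¹^2*tp⁻¹^2 + (-2:ℂ)*q*tp*t2*z1^2*z2^3*p⁻¹ + (2:ℂ)*q*tp*t2*z1^3*z2^2*p⁻¹ + (2:ℂ)*q*tp^2*t2*z1*z2^3*p⁻¹^2 + (2:ℂ)*q*tp^2*t2*z1^2*z2^2*p⁻¹^2 + (-4:ℂ)*q*tp^2*t2*z1^3*z2*p⁻¹^2 + (-2:ℂ)*q*tp^2*t2*z1^3*z2^3*tp⁻¹^2 + (2:ℂ)*q*tp^2*t2*z1^4*z2^2*tp⁻¹^2 + (-4:ℂ)*q*tp^3*t2*z1*z2^2*p⁻¹^3 + (2:ℂ)*q*tp^3*t2*z1^2*z2*p⁻¹^3 + (6:ℂ)*q*tp^3*t2*z1^2*z2^3*p⁻¹*tp⁻¹^2 + (2:ℂ)*q*tp^3*t2*z1^3*p⁻¹^3 + (-4:ℂ)*q*tp^3*t2*z1^3*z2^2*p⁻¹*tp⁻¹^2 + (-2:ℂ)*q*tp^3*t2*z1^4*z2*p⁻¹*tp⁻¹^2 + (2:ℂ)*q*tp^4*t2*z1*z2*p⁻¹^4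 + (-4:ℂ)*q*tp^4*t2*z1*z2^3*p⁻¹^2*tp⁻¹^2 + (-2:ℂ)*q*tp^4*t2*z1^2*p⁻¹^4 + (-4:ℂ)*q*tp^4*t2*z1^2*z2^2*p⁻¹^2*tp⁻¹^2 + (8:ℂ)*q*tp^4*t2*z1^3*z2*p⁻¹^2*tp⁻¹^2 + (6:ℂ)*q*tp^5*t2*z1*z2^2*p⁻¹^3*tp⁻¹^2 + (-4:ℂ)*q*tp^5*t2*z1^2*z2*p⁻¹^3*tp⁻¹^2 + (-2:ℂ)*q*tp^5*t2*z1^3*p⁻¹^3*tp⁻¹^2 + (-2:ℂ)*q*tp^6*t2*z1*z2*p⁻¹^4*tp⁻¹^2 + (2:ℂ)*q*tp^6*t2*z1^2*p⁻¹^4*tp⁻¹^2 + (2:ℂ)*q^2*tp^3*t2*z1^3*z2^4*p⁻¹^2*tp⁻¹^2 + (-2:ℂ)*q^2*tp^3*t2*z1^4*z2^3*p⁻¹^2*tp⁻¹^2 + (-2:ℂ)*q^2*tp^4*t2*z1^2*z2^4*p⁻¹^3*tp⁻¹^2 + (-2:ℂ)*q^2*tp^4*t2*z1^3*z2^3*p⁻¹^3*tp⁻¹^2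 + (4:ℂ)*q^2*tp^4*t2*z1^4*z2^2*p⁻¹^3*tp⁻¹^2 + (4:ℂ)*q^2*tp^5*t2*z1^2*z2^3*p⁻¹^4*tp⁻¹^2 + (-2:ℂ)*q^2*tp^5*t2*z1^3*z2^2*p⁻¹^4*tp⁻¹^2 + (-2:ℂ)*q^2*tp^5*t2*z1^4*z2*p⁻¹^4*tp⁻¹^2 + (-2:ℂ)*q^2*tp^6*t2*z1^2*z2^2*p⁻¹^5*tp⁻¹^2 + (2:ℂ)*q^2*tp^6*t2*z1^3*z2*p⁻¹^5*tp⁻¹^2 + (-2:ℂ)*p*tp^2*t2*z1^2*z2^2*tp⁻¹^2 + (2:ℂ)*p*tp^2*t2*z1^3*z2*tp⁻¹^2 + (4:ℂ)*p*tp^3*t2*z1*z2^2*p⁻¹*tp⁻¹^2 + (-2:ℂ)*p*tp^3*t2*z1^2*z2*p⁻¹*tp⁻¹^2 + (-2:ℂ)*p*tp^3*t2*z1^3*p⁻¹*tp⁻¹^2 + (-2:ℂ)*p*tp^4*t2*z2^2*p⁻¹^2*tp⁻¹^2 + (-2:ℂ)*p*tp^4*t2*z1*z2*p⁻¹^2*tp⁻¹^2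 + (4:ℂ)*p*tp^4*t2*z1^2*p⁻¹^2*tp⁻¹^2 + (2:ℂ)*p*tp^5*t2*z2*p⁻¹^3*tp⁻¹^2 + (-2:ℂ)*p*tp^5*t2*z1*p⁻¹^3*tp⁻¹^2 + (-2:ℂ)*p*q*tp^2*t2*z1^3*z2^3*p⁻¹*tp⁻¹^2 + (2:ℂ)*p*q*tp^2*t2*z1^4*z2^2*p⁻¹*tp⁻¹^2 + (6:ℂ)*p*q*tp^3*t2*z1^2*z2^3*p⁻¹^2*tp⁻¹^2 + (-4:ℂ)*p*q*tp^3*t2*z1^3*z2^2*p⁻¹^2*tp⁻¹^2 + (-2:ℂ)*p*q*tp^3*t2*z1^4*z2*p⁻¹^2*tp⁻¹^2 + (-4:ℂ)*p*q*tp^4*t2*z1*z2^3*p⁻¹^3*tp⁻¹^2 + (-4:ℂ)*p*q*tp^4*t2*z1^2*z2^2*p⁻¹^3*tp⁻¹^2 + (8:ℂ)*p*q*tp^4*t2*z1^3*z2*p⁻¹^3*tp⁻¹^2 + (6:ℂ)*p*q*tp^5*t2*z1*z2^2*p⁻¹^4*tp⁻¹^2 + (-4:ℂ)*p*q*tp^5*t2*z1^2*z2*p⁻¹^4*tp⁻¹^2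 + (-2:ℂ)*p*q*tp^5*t2*z1^3*p⁻¹^4*tp⁻¹^2 + (-2:ℂ)*p*q*tp^6*t2*z1*z2*p⁻¹^5*tp⁻¹^2 + (2:ℂ)*p*q*tp^6*t2*z1^2*p⁻¹^5*tp⁻¹^2 + (2:ℂ)*p*q^2*tp^3*t2*z1^3*z2^4*p⁻¹^3*tp⁻¹^2 + (-2:ℂ)*p*q^2*tp^3*t2*z1^4*z2^3*p⁻¹^3*tp⁻¹^2 + (-2:ℂ)*p*q^2*tp^4*t2*z1^2*z2^4*p⁻¹^4*tp⁻¹^2 + (-2:ℂ)*p*q^2*tp^4*t2*z1^3*z2^3*p⁻¹^4*tp⁻¹^2 + (4:ℂ)*p*q^2*tp^4*t2*z1^4*z2^2*p⁻¹^4*tp⁻¹^2 + (4:ℂ)*p*q^2*tp^5*t2*z1^2*z2^3*p⁻¹^5*tp⁻¹^2 + (-2:ℂ)*p*q^2*tp^5*t2*z1^3*z2^2*p⁻¹^5*tp⁻¹^2 + (-2:ℂ)*p*q^2*tp^5*t2*z1^4*z2*p⁻¹^5*tp⁻¹^2 + (-2:ℂ)*p*q^2*tp^6*t2*z1^2*z2^2*p⁻¹^6*tp⁻¹^2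 + (2:ℂ)*p*q^2*tp^6*t2*z1^3*z2*p⁻¹^6*tp⁻¹^2 + (-2:ℂ)*p^2*tp^2*t2*z1^2*z2^2*p⁻¹*tp⁻¹^2 + (2:ℂ)*p^2*tp^2*t2*z1^3*z2*p⁻¹*tp⁻¹^2 + (4:ℂ)*p^2*tp^3*t2*z1*z2^2*p⁻¹^2*tp⁻¹^2 + (-2:ℂ)*p^2*tp^3*t2*z1^2*z2*p⁻¹^2*tp⁻¹^2 + (-2:ℂ)*p^2*tp^3*t2*z1^3*p⁻¹^2*tp⁻¹^2 + (-2:ℂ)*p^2*tp^4*t2*z2^2*p⁻¹^3*tp⁻¹^2 + (-2:ℂ)*p^2*tp^4*t2*z1*z2*p⁻¹^3*tp⁻¹^2 + (4:ℂ)*p^2*tp^4*t2*z1^2*p⁻¹^3*tp⁻¹^2 + (2:ℂ)*p^2*tp^5*t2*z2*p⁻¹^4*tp⁻¹^2 + (-2:ℂ)*p^2*tp^5*t2*z1*p⁻¹^4*tp⁻¹^2 + (2:ℂ)*p^2*q*t2*z1^4*z2^4*tp⁻¹^2 + (-2:ℂ)*p^2*q*t2*z1^5*z2^3*tp⁻¹^2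 + (-4:ℂ)*p^2*q*tp*t2*z1^3*z2^4*p⁻¹*tp⁻¹^2 + (2:ℂ)*p^2*q*tp*t2*z1^4*z2^3*p⁻¹*tp⁻¹^2 + (2:ℂ)*p^2*q*tp*t2*z1^5*z2^2*p⁻¹*tp⁻¹^2 + (2:ℂ)*p^2*q*tp^2*t2*z1^2*z2^4*p⁻¹^2*tp⁻¹^2 + (-2:ℂ)*p^2*q*tp^2*t2*z1^4*z2^2*p⁻¹^2*tp⁻¹^2 + (4:ℂ)*p^2*q*tp^3*t2*z1^2*z2^3*p⁻¹^3*tp⁻¹^2 + (-2:ℂ)*p^2*q*tp^3*t2*z1^3*z2^2*p⁻¹^3*tp⁻¹^2 + (-2:ℂ)*p^2*q*tp^3*t2*z1^4*z2*p⁻¹^3*tp⁻¹^2 + (-4:ℂ)*p^2*q*tp^4*t2*z1*z2^3*p⁻¹^4*tp⁻¹^2 + (-4:ℂ)*p^2*q*tp^4*t2*z1^2*z2^2*p⁻¹^4*tp⁻¹^2 + (8:ℂ)*p^2*q*tp^4*t2*z1^3*z2*p⁻¹^4*tp⁻¹^2 + (6:ℂ)*p^2*q*tp^5*t2*z1*z2^2*p⁻¹^5*tp⁻¹^2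 + (-4:ℂ)*p^2*q*tp^5*t2*z1^2*z2*p⁻¹^5*tp⁻¹^2 + (-2:ℂ)*p^2*q*tp^5*t2*z1^3*p⁻¹^5*tp⁻¹^2 + (-2:ℂ)*p^2*q*tp^6*t2*z1*z2*p⁻¹^6*tp⁻¹^2 + (2:ℂ)*p^2*q*tp^6*t2*z1^2*p⁻¹^6*tp⁻¹^2 + (-2:ℂ)*p^2*q^2*tp*t2*z1^4*z2^5*p⁻¹^2*tp⁻¹^2 + (2:ℂ)*p^2*q^2*tp*t2*z1^5*z2^4*p⁻¹^2*tp⁻¹^2 + (2:ℂ)*p^2*q^2*tp^2*t2*z1^3*z2^5*p⁻¹^3*tp⁻¹^2 + (2:ℂ)*p^2*q^2*tp^2*t2*z1^4*z2^4*p⁻¹^3*tp⁻¹^2 + (-4:ℂ)*p^2*q^2*tp^2*t2*z1^5*z2^3*p⁻¹^3*tp⁻¹^2 + (-2:ℂ)*p^2*q^2*tp^3*t2*z1^3*z2^4*p⁻¹^4*tp⁻¹^2 + (2:ℂ)*p^2*q^2*tp^3*t2*z1^5*z2^2*p⁻¹^4*tp⁻¹^2 + (-2:ℂ)*p^2*q^2*tp^4*t2*z1^2*z2^4*p⁻¹^5*tp⁻¹^2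 + (2:ℂ)*p^2*q^2*tp^4*t2*z1^4*z2^2*p⁻¹^5*tp⁻¹^2 + (4:ℂ)*p^2*q^2*tp^5*t2*z1^2*z2^3*p⁻¹^6*tp⁻¹^2 + (-2:ℂ)*p^2*q^2*tp^5*t2*z1^3*z2^2*p⁻¹^6*tp⁻¹^2 + (-2:ℂ)*p^2*q^2*tp^5*t2*z1^4*z2*p⁻¹^6*tp⁻¹^2 + (-2:ℂ)*p^2*q^2*tp^6*t2*z1^2*z2^2*p⁻¹^7*tp⁻¹^2 + (2:ℂ)*p^2*q^2*tp^6*t2*z1^3*z2*p⁻¹^7*tp⁻¹^2 + (2:ℂ)*p^3*t2*z1^3*z2^3*tp⁻¹^2 + (-2:ℂ)*p^3*t2*z1^4*z2^2*tp⁻¹^2 + (-4:ℂ)*p^3*tp*t2*z1^2*z2^3*p⁻¹*tp⁻¹^2 + (2:ℂ)*p^3*tp*t2*z1^3*z2^2*p⁻¹*tp⁻¹^2 + (2:ℂ)*p^3*tp*t2*z1^4*z2*p⁻¹*tp⁻¹^2 + (2:ℂ)*p^3*tp^2*t2*z1*z2^3*p⁻¹^2*tp⁻¹^2 + (-2:ℂ)*p^3*tp^2*t2*z1^3*z2*p⁻¹^2*tp⁻¹^2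 + (2:ℂ)*p^3*tp^3*t2*z1*z2^2*p⁻¹^3*tp⁻¹^2 + (-2:ℂ)*p^3*tp^3*t2*z1^3*p⁻¹^3*tp⁻¹^2 + (-2:ℂ)*p^3*tp^4*t2*z2^2*p⁻¹^4*tp⁻¹^2 + (-2:ℂ)*p^3*tp^4*t2*z1*z2*p⁻¹^4*tp⁻¹^2 + (4:ℂ)*p^3*tp^4*t2*z1^2*p⁻¹^4*tp⁻¹^2 + (2:ℂ)*p^3*tp^5*t2*z2*p⁻¹^5*tp⁻¹^2 + (-2:ℂ)*p^3*tp^5*t2*z1*p⁻¹^5*tp⁻¹^2 + (-2:ℂ)*p^3*q*tp*t2*z1^3*z2^4*p⁻¹^2*tp⁻¹^2 + (2:ℂ)*p^3*q*tp*t2*z1^4*z2^3*p⁻¹^2*tp⁻¹^2 + (2:ℂ)*p^3*q*tp^2*t2*z1^2*z2^4*p⁻¹^3*tp⁻¹^2 + (2:ℂ)*p^3*q*tp^2*t2*z1^3*z2^3*p⁻¹^3*tp⁻¹^2 + (-4:ℂ)*p^3*q*tp^2*t2*z1^4*z2^2*p⁻¹^3*tp⁻¹^2 + (-2:ℂ)*p^3*q*tp^3*t2*z1^2*z2^3*p⁻¹^4*tp⁻¹^2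 + (2:ℂ)*p^3*q*tp^3*t2*z1^4*z2*p⁻¹^4*tp⁻¹^2 + (-2:ℂ)*p^3*q*tp^4*t2*z1*z2^3*p⁻¹^5*tp⁻¹^2 + (2:ℂ)*p^3*q*tp^4*t2*z1^3*z2*p⁻¹^5*tp⁻¹^2 + (4:ℂ)*p^3*q*tp^5*t2*z1*z2^2*p⁻¹^6*tp⁻¹^2 + (-2:ℂ)*p^3*q*tp^5*t2*z1^2*z2*p⁻¹^6*tp⁻¹^2 + (-2:ℂ)*p^3*q*tp^5*t2*z1^3*p⁻¹^6*tp⁻¹^2 + (-2:ℂ)*p^3*q*tp^6*t2*z1*z2*p⁻¹^7*tp⁻¹^2 + (2:ℂ)*p^3*q*tp^6*t2*z1^2*p⁻¹^7*tp⁻¹^2) * hP + ((4:ℂ)*tp*t2*z1*z2^2 + (-2:ℂ)*tp*t2*z1^2*z2 + (-2:ℂ)*tp*t2*z1^3 + (-2:ℂ)*tp^2*t2*z2^2*p⁻¹ + (-2:ℂ)*tp^2*t2*z1*z2*p⁻¹ + (4:ℂ)*tp^2*t2*z1*z2^2*tp⁻¹ + (4:ℂ)*tp^2*t2*z1^2*p⁻¹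 + (-2:ℂ)*tp^2*t2*z1^2*z2*tp⁻¹ + (-2:ℂ)*tp^2*t2*z1^3*tp⁻¹ + (2:ℂ)*tp^3*t2*z2*p⁻¹^2 + (-2:ℂ)*tp^3*t2*z2^2*p⁻¹*tp⁻¹ + (-2:ℂ)*tp^3*t2*z1*p⁻¹^2 + (-2:ℂ)*tp^3*t2*z1*z2*p⁻¹*tp⁻¹ + (4:ℂ)*tp^3*t2*z1^2*p⁻¹*tp⁻¹ + (2:ℂ)*tp^4*t2*z2*p⁻¹^2*tp⁻¹ + (-2:ℂ)*tp^4*t2*z1*p⁻¹^2*tp⁻¹ + (-2:ℂ)*q*t2*z1^3*z2^3 + (2:ℂ)*q*t2*z1^4*z2^2 + (6:ℂ)*q*tp*t2*z1^2*z2^3*p⁻¹ + (-4:ℂ)*q*tp*t2*z1^3*z2^2*p⁻¹ + (-2:ℂ)*q*tp*t2*z1^3*z2^3*tp⁻¹ + (-2:ℂ)*q*tp*t2*z1^4*z2*p⁻¹ + (2:ℂ)*q*tp*t2*z1^4*z2^2*tp⁻¹ + (-4:ℂ)*q*tp^2*t2*z1*z2^3*p⁻¹^2 + (-4:ℂ)*q*tp^2*t2*z1^2*z2^2*p⁻¹^2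 + (6:ℂ)*q*tp^2*t2*z1^2*z2^3*p⁻¹*tp⁻¹ + (8:ℂ)*q*tp^2*t2*z1^3*z2*p⁻¹^2 + (-4:ℂ)*q*tp^2*t2*z1^3*z2^2*p⁻¹*tp⁻¹ + (-2:ℂ)*q*tp^2*t2*z1^4*z2*p⁻¹*tp⁻¹ + (6:ℂ)*q*tp^3*t2*z1*z2^2*p⁻¹^3 + (-4:ℂ)*q*tp^3*t2*z1*z2^3*p⁻¹^2*tp⁻¹ + (-4:ℂ)*q*tp^3*t2*z1^2*z2*p⁻¹^3 + (-4:ℂ)*q*tp^3*t2*z1^2*z2^2*p⁻¹^2*tp⁻¹ + (-2:ℂ)*q*tp^3*t2*z1^3*p⁻¹^3 + (8:ℂ)*q*tp^3*t2*z1^3*z2*p⁻¹^2*tp⁻¹ + (-2:ℂ)*q*tp^4*t2*z1*z2*p⁻¹^4 + (6:ℂ)*q*tp^4*t2*z1*z2^2*p⁻¹^3*tp⁻¹ + (2:ℂ)*q*tp^4*t2*z1^2*p⁻¹^4 + (-4:ℂ)*q*tp^4*t2*z1^2*z2*p⁻¹^3*tp⁻¹ + (-2:ℂ)*q*tp^4*t2*z1^3*p⁻¹^3*tp⁻¹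 + (-2:ℂ)*q*tp^5*t2*z1*z2*p⁻¹^4*tp⁻¹ + (2:ℂ)*q*tp^5*t2*z1^2*p⁻¹^4*tp⁻¹ + (2:ℂ)*q^2*tp*t2*z1^3*z2^4*p⁻¹^2 + (-2:ℂ)*q^2*tp*t2*z1^4*z2^3*p⁻¹^2 + (-2:ℂ)*q^2*tp^2*t2*z1^2*z2^4*p⁻¹^3 + (-2:ℂ)*q^2*tp^2*t2*z1^3*z2^3*p⁻¹^3 + (2:ℂ)*q^2*tp^2*t2*z1^3*z2^4*p⁻¹^2*tp⁻¹ + (4:ℂ)*q^2*tp^2*t2*z1^4*z2^2*p⁻¹^3 + (-2:ℂ)*q^2*tp^2*t2*z1^4*z2^3*p⁻¹^2*tp⁻¹ + (4:ℂ)*q^2*tp^3*t2*z1^2*z2^3*p⁻¹^4 + (-2:ℂ)*q^2*tp^3*t2*z1^2*z2^4*p⁻¹^3*tp⁻¹ + (-2:ℂ)*q^2*tp^3*t2*z1^3*z2^2*p⁻¹^4 + (-2:ℂ)*q^2*tp^3*t2*z1^3*z2^3*p⁻¹^3*tp⁻¹ + (-2:ℂ)*q^2*tp^3*t2*z1^4*z2*p⁻¹^4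 + (4:ℂ)*q^2*tp^3*t2*z1^4*z2^2*p⁻¹^3*tp⁻¹ + (-2:ℂ)*q^2*tp^4*t2*z1^2*z2^2*p⁻¹^5 + (4:ℂ)*q^2*tp^4*t2*z1^2*z2^3*p⁻¹^4*tp⁻¹ + (2:ℂ)*q^2*tp^4*t2*z1^3*z2*p⁻¹^5 + (-2:ℂ)*q^2*tp^4*t2*z1^3*z2^2*p⁻¹^4*tp⁻¹ + (-2:ℂ)*q^2*tp^4*t2*z1^4*z2*p⁻¹^4*tp⁻¹ + (-2:ℂ)*q^2*tp^5*t2*z1^2*z2^2*p⁻¹^5*tp⁻¹ + (2:ℂ)*q^2*tp^5*t2*z1^3*z2*p⁻¹^5*tp⁻¹ + (-2:ℂ)*p*t2*z1^2*z2^2 + (2:ℂ)*p*t2*z1^3*z2 + (-2:ℂ)*p*tp*t2*z1^2*z2^2*tp⁻¹ + (2:ℂ)*p*tp*t2*z1^3*z2*tp⁻¹) * hT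
end
end

section
/- For the 14V1 parameter family, the amplitude Λ factorizes: for all complex z1, z2, Λ(z1,z2) = −(p⁴/tp²)·(z1 − τp)·(z2 − τp)². Consequently, wherever the denominators are nonzero, S(z1,z2) = −(z2 − τp)/(z1 − τp) and N(z1,z2) = τ2·(z1−z2)·(z1z2 − τp²)/( 2·(z1−τp)²·(z2−τp) ). -/
noncomputable section

/-- Factorization of `Λ` and the resulting `S` and `N` for the 14V1 model. -/
theorem statement16 (p tp t2 : ℂ)
    (hp : p ≠ 0) (htp : tp ≠ 0) (ht2 : t2 ≠ 0)
    (q t1 s1 s2 sp X11 Y τp τ2 : ℂ)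
    (hq : q = 0) (hs1 : s1 = 0) (hs2 : s2 = 0) (hsp : sp = 0)
    (ht1 : t1 = -(p ^ 2 * t2) / tp ^ 2)
    (hX11 : X11 = p ^ 2 / tp) (hY : Y = p ^ 2 / tp)
    (hτp : τp = tp / p) (hτ2 : τ2 = t2 / p) :
    (∀ z1 z2 : ℂ,
      Lam p q t1 t2 s1 s2 tp sp X11 Y z1 z2 =
        -(p ^ 4 / tp ^ 2) * (z1 - τp) * (z2 - τp) ^ 2) ∧
    ∀ z1 z2 : ℂ, Lam p q t1 t2 s1 s2 tp sp X11 Y z2 z1 ≠ 0 →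
      Sc p q t1 t2 s1 s2 tp sp X11 Y z1 z2 = -((z2 - τp) / (z1 - τp)) ∧
      Nc p q t1 t2 s1 s2 tp sp X11 Y z1 z2 =
          τ2 * (z1 - z2) * (z1 * z2 - τp ^ 2) /
            (2 * (z1 - τp) ^ 2 * (z2 - τp)) := by
  have hfac : ∀ z1 z2 : ℂ,
      Lam p q t1 t2 s1 s2 tp sp X11 Y z1 z2 =
        -(p ^ 4 / tp ^ 2) * (z1 - τp) * (z2 - τp) ^ 2 := by
    intro z1 z2
    subst hq hs1 hs2 hsp ht1 hX11 hY hτp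
    unfold Lam
    field_simp
    ring
  refine ⟨hfac, fun z1 z2 hne => ?_⟩
  have h21 := hfac z2 z1
  rw [h21] at hne
  have h2 : z2 - τp ≠ 0 := fun h => hne (by rw [h]; ring)
  have h1 : z1 - τp ≠ 0 := fun h => hne (by rw [h]; ring)
  have hc : -(p ^ 4 / tp ^ 2) ≠ 0 := by
    simpa using div_ne_zero (pow_ne_zero 4 hp) (pow_ne_zero 2 htp)
  constructor
  · rw [Sc, hfac, h21, neg_inj, div_eq_div_iff hne h1]
    ring
  · rw [Nc, h21, div_eq_div_iff (by
      exact mul_ne_zero two_ne_zero hne)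
      (by exact mul_ne_zero (mul_ne_zero two_ne_zero (pow_ne_zero 2 h1)) h2)]
    have hτp0 : τp ≠ 0 := by rw [hτp]; exact div_ne_zero htp hp
    have htpeq : tp = p * τp := by rw [hτp]; field_simp
    subst hq ht1 hτ2
    rw [htpeq]
    field_simp
    ring
end
end

section
/- For the 14V2 parameter family, the amplitude Λ factorizes: for all complex z1, z2, Λ(z1,z2) = (p³/tp)·(z1 − τp)·(z2 − τp). In particular Λ(z1,z2) = Λ(z2,z1), so wherever Λ ≠ 0 the scattering amplitude is trivial, S(z1,z2) = −1, and the decay coefficient is N(z1,z2) = τ2·(z1−z2)·(z1z2 + τp²)/( 2·τp·(z1−τp)·(z2−τp) ). -/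
noncomputable section

/-- Factorization of `Λ` for the 14V2 model: `Λ` is symmetric, the scattering
amplitude is trivial and the decay coefficient factorizes. -/
theorem statement17 (p tp t2 : ℂ)
    (hp : p ≠ 0) (htp : tp ≠ 0) (ht2 : t2 ≠ 0)
    (q t1 s1 s2 sp X11 Y τp τ2 : ℂ)
    (hq : q = 0) (hs1 : s1 = 0) (hs2 : s2 = 0) (hsp : sp = 0)
    (ht1 : t1 = p ^ 2 * t2 / tp ^ 2)
    (hX11 : X11 = 0) (hY : Y = p ^ 2 / tp)
    (hτp : τp = tp / p) (hτ2 : τ2 = t2 / p) :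
    (∀ z1 z2 : ℂ,
      Lam p q t1 t2 s1 s2 tp sp X11 Y z1 z2 =
        (p ^ 3 / tp) * (z1 - τp) * (z2 - τp)) ∧
    (∀ z1 z2 : ℂ,
      Lam p q t1 t2 s1 s2 tp sp X11 Y z1 z2 = Lam p q t1 t2 s1 s2 tp sp X11 Y z2 z1) ∧
    ∀ z1 z2 : ℂ, Lam p q t1 t2 s1 s2 tp sp X11 Y z2 z1 ≠ 0 →
      Sc p q t1 t2 s1 s2 tp sp X11 Y z1 z2 = -1 ∧
      Nc p q t1 t2 s1 s2 tp sp X11 Y z1 z2 =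
          τ2 * (z1 - z2) * (z1 * z2 + τp ^ 2) /
            (2 * τp * (z1 - τp) * (z2 - τp)) := by
  subst hq hs1 hs2 hsp ht1 hX11 hY hτp hτ2
  have hL : ∀ z1 z2 : ℂ,
      Lam p 0 (p ^ 2 * t2 / tp ^ 2) t2 0 0 tp 0 0 (p ^ 2 / tp) z1 z2 =
        (p ^ 3 / tp) * (z1 - tp / p) * (z2 - tp / p) := by
    intro z1 z2
    simp only [Lam]
    field_simp
    ring
  have hsym : ∀ z1 z2 : ℂ,
      Lam p 0 (p ^ 2 * t2 / tp ^ 2) t2 0 0 tp 0 0 (p ^ 2 / tp) z1 z2 =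
        Lam p 0 (p ^ 2 * t2 / tp ^ 2) t2 0 0 tp 0 0 (p ^ 2 / tp) z2 z1 := by
    intro z1 z2; rw [hL, hL]; ring
  refine ⟨hL, hsym, fun z1 z2 hne => ?_⟩
  have h1 : z1 - tp / p ≠ 0 := by
    intro h; apply hne; rw [hL, h]; ring
  have h2 : z2 - tp / p ≠ 0 := by
    intro h; apply hne; rw [hL, h]; ring
  constructor
  · rw [Sc, hsym z1 z2, div_self hne]
  · rw [Nc, hL]
    have hd1 : (2:ℂ) * (p ^ 3 / tp * (z2 - tp / p) * (z1 - tp / p)) ≠ 0 := by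
      apply mul_ne_zero two_ne_zero
      exact mul_ne_zero (mul_ne_zero (div_ne_zero (pow_ne_zero 3 hp) htp) h2) h1
    have hd2 : (2:ℂ) * (tp / p) * (z1 - tp / p) * (z2 - tp / p) ≠ 0 :=
      mul_ne_zero (mul_ne_zero (mul_ne_zero two_ne_zero (div_ne_zero htp hp)) h1) h2
    rw [div_eq_div_iff hd1 hd2]
    field_simp
    ring
end
end

section
/- Let p, q, tp, t2, t3 be nonzero complex numbers, V an arbitrary complex number, and let g be a nonzero complex number with g² = t2/p. Consider the SpR two-site Hamiltonian H12 with the symmetric diagonal gauge: v00 = 0, v01 = v10 = V/2, v02 = v20 = V + Y/2, v11 = V, v12 = v21 = (3V + Y)/2, v22 = 2V + Y, where Y = (t3² − t3·p + p²)/tp + q·tp/p. Set G = diag(1, g, 1), N0 = tp/p², sz = diag(0,1,2), τp = tp/p, θ = q/p, τ3 = t3/p, and δ = τ3² − τ3 + 1 + τp²·θ. Then the reduced Hamiltonian N0·(G⊗G)·( H12 − (V/2)·(sz⊗I3 + I3⊗sz) )·(G⊗G)^{-1} equals the 9×9 matrix (rows and columns indexed by the ordered basis |00⟩,|01⟩,|02⟩,|10⟩,|11⟩,|12⟩,|20⟩,|21⟩,|22⟩)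 whose only nonzero entries are: (|01⟩,|10⟩) = τp; (|10⟩,|01⟩) = τp·θ; (|02⟩,|02⟩) = δ/2; (|02⟩,|11⟩) = τp; (|02⟩,|20⟩) = τp²; (|11⟩,|02⟩) = τp·τ3·θ; (|11⟩,|20⟩) = τp·τ3; (|12⟩,|12⟩) = δ/2; (|12⟩,|21⟩) = τp·τ3; (|20⟩,|02⟩) = θ·(τ3²−τ3+1); (|20⟩,|11⟩) = τp·θ; (|20⟩,|20⟩) = δ/2; (|21⟩,|12⟩) = τp·τ3·θ; (|21⟩,|21⟩) = δ/2; (|22⟩,|22⟩) = δ. -/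
open Matrix Kronecker

noncomputable section

/-- Elementary 3×3 matrices `E i j` with entry 1 in row `i`, column `j`. -/
def E (i j : Fin 3) : Matrix (Fin 3) (Fin 3) ℂ := Matrix.single i j 1

/-- The general two-site Hamiltonian of a U(1)-invariant three-state model. -/
def H12 (p q t1 t2 t3 s1 s2 s3 tp sp : ℂ) (v : Fin 3 → Fin 3 → ℂ) :
    Matrix (Fin 3 × Fin 3) (Fin 3 × Fin 3) ℂ :=
  p • (E 0 1 ⊗ₖ E 1 0) + q • (E 1 0 ⊗ₖ E 0 1) + t1 • (E 2 1 ⊗ₖ E 0 1) +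
    s1 • (E 1 2 ⊗ₖ E 1 0) + t2 • (E 0 1 ⊗ₖ E 2 1) + s2 • (E 1 0 ⊗ₖ E 1 2) +
    t3 • (E 1 2 ⊗ₖ E 2 1) + s3 • (E 2 1 ⊗ₖ E 1 2) + tp • (E 0 2 ⊗ₖ E 2 0) +
    sp • (E 2 0 ⊗ₖ E 0 2) + ∑ i : Fin 3, ∑ j : Fin 3, v i j • (E i i ⊗ₖ E j j)

set_option maxHeartbeats 8000000 in
/-- The reduced Hamiltonian of the SpR model in the symmetric diagonal gauge. -/
theorem statement18 (p q tp t2 t3 : ℂ) (V g : ℂ)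
    (hp : p ≠ 0) (hq : q ≠ 0) (htp : tp ≠ 0) (ht2 : t2 ≠ 0) (ht3 : t3 ≠ 0)
    (hg : g ≠ 0) (hg2 : g ^ 2 = t2 / p)
    (t1 s1 s2 s3 sp Y τp θ τ3 δ N0 : ℂ)
    (ht1 : t1 = q * t2 / p) (hs1 : s1 = p * t3 / t2) (hs2 : s2 = q * t3 / t2)
    (hs3 : s3 = q * t3 / p) (hsp : sp = q * (t3 ^ 2 - t3 * p + p ^ 2) / (p * tp))
    (hY : Y = (t3 ^ 2 - t3 * p + p ^ 2) / tp + q * tp / p)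
    (hτp : τp = tp / p) (hθ : θ = q / p) (hτ3 : τ3 = t3 / p)
    (hδ : δ = τ3 ^ 2 - τ3 + 1 + τp ^ 2 * θ) (hN0 : N0 = tp / p ^ 2) :
    N0 • ((Matrix.diagonal ![1, g, 1] ⊗ₖ Matrix.diagonal ![1, g, 1]) *
        (H12 p q t1 t2 t3 s1 s2 s3 tp sp
            ![![0, V / 2, V + Y / 2],
              ![V / 2, V, (3 * V + Y) / 2],
              ![V + Y / 2, (3 * V + Y) / 2, 2 * V + Y]] -
          (V / 2) • (Matrix.diagonal ![0, 1, 2] ⊗ₖ (1 : Matrix (Fin 3) (Fin 3) ℂ) +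
            (1 : Matrix (Fin 3) (Fin 3) ℂ) ⊗ₖ Matrix.diagonal ![0, 1, 2])) *
        (Matrix.diagonal ![1, g, 1] ⊗ₖ Matrix.diagonal ![1, g, 1])⁻¹)
      = τp • (E 0 1 ⊗ₖ E 1 0) + (τp * θ) • (E 1 0 ⊗ₖ E 0 1) +
        (δ / 2) • (E 0 0 ⊗ₖ E 2 2) + τp • (E 0 1 ⊗ₖ E 2 1) +
        (τp ^ 2) • (E 0 2 ⊗ₖ E 2 0) +
        (τp * τ3 * θ) • (E 1 0 ⊗ₖ E 1 2) + (τp * τ3) • (E 1 2 ⊗ₖ E 1 0) +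
        (δ / 2) • (E 1 1 ⊗ₖ E 2 2) + (τp * τ3) • (E 1 2 ⊗ₖ E 2 1) +
        (θ * (τ3 ^ 2 - τ3 + 1)) • (E 2 0 ⊗ₖ E 0 2) + (τp * θ) • (E 2 1 ⊗ₖ E 0 1) +
        (δ / 2) • (E 2 2 ⊗ₖ E 0 0) + (τp * τ3 * θ) • (E 2 1 ⊗ₖ E 1 2) +
        (δ / 2) • (E 2 2 ⊗ₖ E 1 1) + δ • (E 2 2 ⊗ₖ E 2 2) := by
  have ht2' : t2 = g ^ 2 * p := by
    field_simp at hg2; exact hg2.symm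
  subst ht2' ht1 hs1 hs2 hs3 hsp hY hτp hθ hτ3 hδ hN0
  have hGinv : (Matrix.diagonal ![1, g, 1] ⊗ₖ Matrix.diagonal ![1, g, 1])⁻¹ =
      Matrix.diagonal ![1, g⁻¹, 1] ⊗ₖ Matrix.diagonal ![1, g⁻¹, 1] := by
    apply Matrix.inv_eq_right_inv
    rw [← Matrix.mul_kronecker_mul, Matrix.diagonal_mul_diagonal]
    have : (fun i => (![1, g, 1] : Fin 3 → ℂ) i * ![1, g⁻¹, 1] i) = fun _ => 1 := by
      funext i
      fin_cases i <;> simp [mul_inv_cancel₀ hg]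
    rw [this, Matrix.diagonal_one, Matrix.one_kronecker_one]
  rw [hGinv, Matrix.diagonal_kronecker_diagonal, Matrix.diagonal_kronecker_diagonal]
  ext ⟨a, b⟩ ⟨c, d⟩
  rw [Matrix.smul_apply, Matrix.mul_diagonal, Matrix.diagonal_mul]
  fin_cases a <;> fin_cases b <;> fin_cases c <;> fin_cases d <;>
    simp [H12, E, Fin.sum_univ_three, Matrix.single,
        Matrix.diagonal_apply, Matrix.smul_apply, Matrix.sub_apply,
        Matrix.add_apply, Matrix.one_apply, Matrix.sum_apply] <;>
    (try rw [mul_comm g, mul_assoc, mul_inv_cancel₀ hg, mul_one]) <;>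
    (try field_simp) <;> (try ring) <;>
    (try (rw [div_eq_iff (by simp [hp, htp])]; ring)) <;>
    (try (field_simp; rw [div_eq_iff (by simp [hp, htp])]; ring))
end
end

section
/- Let p, tp, t2 be nonzero complex numbers, V an arbitrary complex number, and let g be a nonzero complex number with g² = t2/p. Consider the 14V2 two-site Hamiltonian H12 with the symmetric diagonal gauge: v00 = 0, v01 = v10 = V/2, v02 = v20 = V + Y/2, v11 = V, v12 = (3V + Y)/2, v21 = (3V − Y)/2, v22 = 2V, where Y = p²/tp. Set G = diag(1, g, 1), N0 = tp/p², sz = diag(0,1,2), τp = tp/p. Then the reduced Hamiltonian N0·(G⊗G)·( H12 − (V/2)·(sz⊗I3 + I3⊗sz) )·(G⊗G)^{-1} equals the 9×9 matrix (rows and columns indexed by the ordered basis |00⟩,|01⟩,|02⟩,|10⟩,|11⟩,|12⟩,|20⟩,|21⟩,|22⟩) whose only nonzero entries are: (|01⟩,|10⟩) = τp; (|02⟩,|02⟩) = 1/2; (|02⟩,|11⟩) = τp; (|02⟩,|20⟩) = τp²; (|12⟩,|12⟩) = 1/2; (|12⟩,|21⟩) = −τp; (|20⟩,|11⟩) = τp^{-1};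 (|20⟩,|20⟩) = 1/2; (|21⟩,|21⟩) = −1/2. -/
open Matrix Kronecker

noncomputable section

lemma conjE (dL dR : Fin 3 × Fin 3 → ℂ) (a b c d : Fin 3) :
    Matrix.diagonal dL * (E a b ⊗ₖ E c d) * Matrix.diagonal dR
      = (dL (a, c) * dR (b, d)) • (E a b ⊗ₖ E c d) := by
  ext ⟨i, j⟩ ⟨k, l⟩
  simp only [Matrix.diagonal_mul, Matrix.mul_diagonal, Matrix.smul_apply,
    Matrix.kroneckerMap_apply, E, Matrix.single, Matrix.of_apply, smul_eq_mul]
  split_ifs with h1 h2 h2 <;> simp_all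

lemma sumvE (v : Fin 3 → Fin 3 → ℂ) :
    (∑ i : Fin 3, ∑ j : Fin 3, v i j • (E i i ⊗ₖ E j j))
      = Matrix.diagonal (fun x : Fin 3 × Fin 3 => v x.1 x.2) := by
  ext ⟨i, j⟩ ⟨k, l⟩
  simp only [Matrix.sum_apply, Matrix.smul_apply, Matrix.kroneckerMap_apply, E,
    Matrix.single, Matrix.of_apply, smul_eq_mul, Matrix.diagonal_apply,
    Prod.mk.injEq]
  rw [Finset.sum_eq_single i, Finset.sum_eq_single j]
  · split_ifs with h1 h2 h2 <;> simp_all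
  · intro b _ hb; simp [hb]
  · simp
  · intro b _ hb
    apply Finset.sum_eq_zero
    intro x _
    simp [hb]
  · simp

lemma dkl (a : Fin 3 → ℂ) : Matrix.diagonal a ⊗ₖ (1 : Matrix (Fin 3) (Fin 3) ℂ)
    = Matrix.diagonal (fun x : Fin 3 × Fin 3 => a x.1) := by
  rw [← Matrix.diagonal_one, Matrix.diagonal_kronecker_diagonal]; simp
lemma dkr (a : Fin 3 → ℂ) : (1 : Matrix (Fin 3) (Fin 3) ℂ) ⊗ₖ Matrix.diagonal a
    = Matrix.diagonal (fun x : Fin 3 × Fin 3 => a x.2) := by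
  rw [← Matrix.diagonal_one, Matrix.diagonal_kronecker_diagonal]; simp


set_option maxHeartbeats 1000000 in
/-- The reduced Hamiltonian of the 14V2 model in the symmetric diagonal gauge. -/
theorem statement19 (p tp t2 : ℂ) (V g : ℂ)
    (hp : p ≠ 0) (htp : tp ≠ 0) (ht2 : t2 ≠ 0)
    (hg : g ≠ 0) (hg2 : g ^ 2 = t2 / p)
    (t1 t3 Y τp N0 : ℂ)
    (ht1 : t1 = p ^ 2 * t2 / tp ^ 2) (ht3 : t3 = -p)
    (hY : Y = p ^ 2 / tp) (hτp : τp = tp / p) (hN0 : N0 = tp / p ^ 2) :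
    N0 • ((Matrix.diagonal ![1, g, 1] ⊗ₖ Matrix.diagonal ![1, g, 1]) *
        (H12 p 0 t1 t2 t3 0 0 0 tp 0
            ![![0, V / 2, V + Y / 2],
              ![V / 2, V, (3 * V + Y) / 2],
              ![V + Y / 2, (3 * V - Y) / 2, 2 * V]] -
          (V / 2) • (Matrix.diagonal ![0, 1, 2] ⊗ₖ (1 : Matrix (Fin 3) (Fin 3) ℂ) +
            (1 : Matrix (Fin 3) (Fin 3) ℂ) ⊗ₖ Matrix.diagonal ![0, 1, 2])) *
        (Matrix.diagonal ![1, g, 1] ⊗ₖ Matrix.diagonal ![1, g, 1])⁻¹)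
      = τp • (E 0 1 ⊗ₖ E 1 0) + (1 / 2 : ℂ) • (E 0 0 ⊗ₖ E 2 2) +
        τp • (E 0 1 ⊗ₖ E 2 1) + (τp ^ 2) • (E 0 2 ⊗ₖ E 2 0) +
        (1 / 2 : ℂ) • (E 1 1 ⊗ₖ E 2 2) + (-τp) • (E 1 2 ⊗ₖ E 2 1) +
        τp⁻¹ • (E 2 1 ⊗ₖ E 0 1) + (1 / 2 : ℂ) • (E 2 2 ⊗ₖ E 0 0) +
        (-(1 / 2) : ℂ) • (E 2 2 ⊗ₖ E 1 1) := by
  have hinv : (Matrix.diagonal ![1, g, 1] ⊗ₖ Matrix.diagonal ![1, g, 1])⁻¹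
      = Matrix.diagonal ![1, g⁻¹, 1] ⊗ₖ Matrix.diagonal ![1, g⁻¹, 1] := by
    apply inv_eq_right_inv
    rw [← Matrix.mul_kronecker_mul, Matrix.diagonal_mul_diagonal]
    have h : (fun i => (![1, g, 1] : Fin 3 → ℂ) i * ![1, g⁻¹, 1] i) = 1 := by
      funext i; fin_cases i <;> simp [mul_inv_cancel₀ hg]
    rw [h]
    rw [show Matrix.diagonal (1 : Fin 3 → ℂ) = 1 from Matrix.diagonal_one,
      Matrix.one_kronecker_one]
  rw [hinv, Matrix.diagonal_kronecker_diagonal, Matrix.diagonal_kronecker_diagonal,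
    H12, sumvE, dkl, dkr]
  simp only [zero_smul, add_zero, zero_add, Matrix.mul_add, Matrix.add_mul,
    Matrix.mul_sub, Matrix.sub_mul, mul_smul_comm, smul_mul_assoc,
    conjE, Matrix.diagonal_mul_diagonal, smul_add, smul_sub, smul_smul]
  simp only [Matrix.cons_val_zero, Matrix.cons_val_one, Matrix.cons_val_two,
    Matrix.head_cons, Matrix.tail_cons, one_mul, mul_one]
  have hgg : g * g⁻¹ = (1 : ℂ) := mul_inv_cancel₀ hg
  have hii : g⁻¹ * g⁻¹ = p / t2 := by
    rw [← mul_inv, show g * g = t2 / p from by rw [← pow_two]; exact hg2, inv_div]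
  subst ht1 ht3 hY hτp hN0
  rw [show tp / p ^ 2 * (p * (g * g⁻¹)) = tp / p from by rw [hgg]; field_simp,
    show tp / p ^ 2 * (p ^ 2 * t2 / tp ^ 2 * (g⁻¹ * g⁻¹)) = (tp / p)⁻¹ from by
      rw [hii]; field_simp,
    show tp / p ^ 2 * (t2 * (g⁻¹ * g⁻¹)) = tp / p from by rw [hii]; field_simp,
    show tp / p ^ 2 * (-p * (g * g⁻¹)) = -(tp / p) from by rw [hgg]; field_simp,
    show tp / p ^ 2 * tp = (tp / p) ^ 2 from by field_simp]
  have h4 : (1 / 2 : ℂ) • (E 0 0 ⊗ₖ E 2 2) + (1 / 2 : ℂ) • (E 1 1 ⊗ₖ E 2 2) +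
      (1 / 2 : ℂ) • (E 2 2 ⊗ₖ E 0 0) + (-(1 / 2) : ℂ) • (E 2 2 ⊗ₖ E 1 1)
      = Matrix.diagonal (fun x : Fin 3 × Fin 3 =>
          (![![0, 0, (1 / 2 : ℂ)], ![0, 0, (1 / 2 : ℂ)], ![(1 / 2 : ℂ), -(1 / 2 : ℂ), 0]]) x.1 x.2) := by
    rw [← sumvE]
    simp [Fin.sum_univ_three]
    abel
  have hdiag :
      (tp / p ^ 2) • Matrix.diagonal (fun i : Fin 3 × Fin 3 =>
          ![1, g, 1] i.1 * ![1, g, 1] i.2 *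
            ![![0, V / 2, V + p ^ 2 / tp / 2], ![V / 2, V, (3 * V + p ^ 2 / tp) / 2],
              ![V + p ^ 2 / tp / 2, (3 * V - p ^ 2 / tp) / 2, 2 * V]] i.1 i.2 *
            (![1, g⁻¹, 1] i.1 * ![1, g⁻¹, 1] i.2)) -
        ((tp / p ^ 2 * (V / 2)) • Matrix.diagonal (fun i : Fin 3 × Fin 3 =>
            ![1, g, 1] i.1 * ![1, g, 1] i.2 * ![0, 1, 2] i.1 * (![1, g⁻¹, 1] i.1 * ![1, g⁻¹, 1] i.2)) +
         (tp / p ^ 2 * (V / 2)) • Matrix.diagonal (fun i : Fin 3 × Fin 3 =>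
            ![1, g, 1] i.1 * ![1, g, 1] i.2 * ![0, 1, 2] i.2 * (![1, g⁻¹, 1] i.1 * ![1, g⁻¹, 1] i.2)))
      = (1 / 2 : ℂ) • (E 0 0 ⊗ₖ E 2 2) + (1 / 2 : ℂ) • (E 1 1 ⊗ₖ E 2 2) +
        (1 / 2 : ℂ) • (E 2 2 ⊗ₖ E 0 0) + (-(1 / 2) : ℂ) • (E 2 2 ⊗ₖ E 1 1) := by
    rw [h4, ← Matrix.diagonal_smul, ← Matrix.diagonal_smul, ← Matrix.diagonal_smul,
      Matrix.diagonal_add, Matrix.diagonal_sub]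
    apply congrArg Matrix.diagonal
    funext ⟨i, j⟩
    fin_cases i <;> fin_cases j <;>
      simp only [Pi.smul_apply, Pi.sub_apply, Pi.add_apply, smul_eq_mul, Fin.zero_eta, Fin.mk_one, Fin.reduceFinMk,
        Matrix.cons_val_zero, Matrix.cons_val_one, Matrix.cons_val_two,
        Matrix.head_cons, Matrix.tail_cons, one_mul, mul_one] <;>
      field_simp [hp, htp, hg] <;> (try ring) <;>
      (try field_simp [hp, htp, hg]) <;> (try ring)
  rw [add_sub_assoc, hdiag]
  abel
end
end
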